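/- arXiv:1009.2142 — 4 statements merged into one kernel-verified Lean document; each statement's English description precedes it below -/
import Mathlib

section
/- There exist a consistent digital line segments system S and a constant c > 0 such that for all p,q ∈ ℤ², H(\overline{pq}, S(p,q)) ≤ c · log(|\overline{pq}| + 2), where |\overline{pq}| is the Euclidean distance between p and q. -/
/- `upAt prec p q t` : the level `t` is among the `q.2 - p.2` greatest elements
(w.r.t. the order `prec`) of the segment interval `[p.1+p.2, q.1+q.2-1]`. -/
open Classical in
noncomputable def upAt (prec : ℤ → ℤ → Prop) (p q : ℤ × ℤ) (t : ℤ) : Prop :=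
  (((Finset.Ico (p.1 + p.2) (q.1 + q.2)).filter (fun u => u = t ∨ prec t u)).card : ℤ)
    ≤ q.2 - p.2

/- The digital segment derived from `prec`, for `p.1 ≤ q.1` and `p.2 ≤ q.2`:
the monotone staircase from `p` to `q` that goes up at level `t` exactly when
`upAt prec p q t` holds. -/
open Classical in
noncomputable def digSegNE (prec : ℤ → ℤ → Prop) (p q : ℤ × ℤ) : Set (ℤ × ℤ) :=
  { r | p.1 + p.2 ≤ r.1 + r.2 ∧ r.1 + r.2 ≤ q.1 + q.2 ∧
    r.2 = p.2 + (((Finset.Ico (p.1 + p.2) (r.1 + r.2)).filter (fun t => upAt prec p q t)).card : ℤ) }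

/- The digital segment for `p.1 ≤ q.1` (reflecting over the `y`-axis if `p.2 > q.2`). -/
noncomputable def digSegAux (prec : ℤ → ℤ → Prop) (p q : ℤ × ℤ) : Set (ℤ × ℤ) :=
  if p.2 ≤ q.2 then digSegNE prec p q
  else (fun r : ℤ × ℤ => (-r.1, r.2)) '' digSegNE prec (-q.1, q.2) (-p.1, p.2)

/- The full system of digital segments `S_≺` derived from the order `prec`. -/
noncomputable def digSeg (prec : ℤ → ℤ → Prop) (p q : ℤ × ℤ) : Set (ℤ × ℤ) :=
  if p.1 ≤ q.1 then digSegAux prec p q else digSegAux prec q p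

/- Adjacency in the grid graph on `ℤ²`. -/
def GridAdj (p q : ℤ × ℤ) : Prop :=
  (|q.1 - p.1| = 1 ∧ q.2 = p.2) ∨ (q.1 = p.1 ∧ |q.2 - p.2| = 1)

/- `S` is the vertex set of a path from `p` to `q` in the grid graph on `ℤ²`. -/
def IsGridPath (p q : ℤ × ℤ) (S : Set (ℤ × ℤ)) : Prop :=
  ∃ n : ℕ, ∃ f : Fin (n + 1) → ℤ × ℤ, f 0 = p ∧ f (Fin.last n) = q ∧
    Function.Injective f ∧ (∀ i : Fin n, GridAdj (f i.castSucc) (f i.succ)) ∧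
    Set.range f = S

/- A consistent digital line segments system (CDS): axioms (S1)-(S5). -/
structure IsCDS (S : ℤ × ℤ → ℤ × ℤ → Set (ℤ × ℤ)) : Prop where
  path : ∀ p q, IsGridPath p q (S p q)                     -- (S1)
  symm : ∀ p q, S p q = S q p                               -- (S2)
  subseg : ∀ p q r, r ∈ S p q → S p r ⊆ S p q               -- (S3)
  prolong : ∀ p q, ∃ r, r ∉ S p q ∧ S p q ⊆ S p r           -- (S4)
  monoV : ∀ p q, p.1 = q.1 → ∀ r ∈ S p q, r.1 = p.1         -- (S5), vertical
  monoH : ∀ p q, p.2 = q.2 → ∀ r ∈ S p q, r.2 = p.2         -- (S5), horizontal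

/- The inclusion `ℤ² ⊆ ℝ²` (Euclidean plane). -/
noncomputable def toR2 (p : ℤ × ℤ) : EuclideanSpace ℝ (Fin 2) := WithLp.toLp 2 ![(p.1 : ℝ), (p.2 : ℝ)]

/- The 2-adic valuation of an integer, with `v2 0 = ⊤`. -/
noncomputable def v2 (k : ℤ) : ℕ∞ := if k = 0 then ⊤ else (padicValInt 2 k : ℕ∞)

/- The total order on `ℤ` defined via 2-adic valuations. -/
def vorder (a b : ℤ) : Prop :=
  ∃ i : ℕ, v2 (a - i) < v2 (b - i) ∧ ∀ j : ℕ, j < i → v2 (a - j) = v2 (b - j)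

/-! ## Construction: a CDS with logarithmic Hausdorff error -/

/-- bit-reversal ("van der Corput") strict total order on ℤ:
`myLT t u` iff at the least binary digit where they differ, `t` has 0 and `u` has 1. -/
def myLT (t u : ℤ) : Prop :=
  ∃ i : ℕ, t % 2 ^ i = u % 2 ^ i ∧ t % 2 ^ (i + 1) < u % 2 ^ (i + 1)

lemma emod_pow_le (x : ℤ) {i j : ℕ} (h : i ≤ j) :
    x % 2 ^ j % 2 ^ i = x % 2 ^ i :=
  Int.emod_emod_of_dvd x (pow_dvd_pow 2 h)

lemma eq_of_all_emod {t u : ℤ} (h : ∀ i : ℕ, t % 2 ^ i = u % 2 ^ i) : t = u := by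
  obtain ⟨i, hi⟩ : ∃ i : ℕ, |t - u| < 2 ^ i := by
    obtain ⟨i, hi⟩ := pow_unbounded_of_one_lt (R := ℤ) |t - u| one_lt_two
    exact ⟨i, hi⟩
  have hd : (2 : ℤ) ^ i ∣ t - u := Int.ModEq.dvd (h i).symm
  have := Int.eq_zero_of_abs_lt_dvd hd hi
  omega

lemma myLT_total {t u : ℤ} (h : t ≠ u) : myLT t u ∨ myLT u t := by
  by_contra hc
  push_neg at hc
  apply h
  apply eq_of_all_emod
  intro i
  induction i with
  | zero => simp
  | succ n ih =>
    rcases lt_trichotomy (t % 2 ^ (n + 1)) (u % 2 ^ (n + 1)) with h1 | h1 | h1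
    · exact absurd ⟨n, ih, h1⟩ hc.1
    · exact h1
    · exact absurd ⟨n, ih.symm, h1⟩ hc.2

lemma myLT_irrefl (t : ℤ) : ¬ myLT t t := by
  rintro ⟨i, _, h⟩; exact lt_irrefl _ h

lemma myLT_trans {t u v : ℤ} (h1 : myLT t u) (h2 : myLT u v) : myLT t v := by
  obtain ⟨i, hi1, hi2⟩ := h1
  obtain ⟨j, hj1, hj2⟩ := h2
  rcases le_or_gt i j with hij | hij
  · refine ⟨i, ?_, ?_⟩
    · rw [hi1, ← emod_pow_le u hij, ← emod_pow_le v hij, hj1]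
    · rcases eq_or_lt_of_le hij with rfl | hij'
      · omega
      · have : u % 2 ^ (i+1) = v % 2 ^ (i+1) := by
          rw [← emod_pow_le u hij', ← emod_pow_le v hij', hj1]
        omega
  · refine ⟨j, ?_, ?_⟩
    · rw [← emod_pow_le t (le_of_lt hij), hi1, emod_pow_le u (le_of_lt hij), hj1]
    · have : t % 2 ^ (j+1) = u % 2 ^ (j+1) := by
        have : (i:ℕ) ≥ j + 1 := hij
        rw [← emod_pow_le t this, ← emod_pow_le u this, hi1]
      omega

lemma myLT_asymm {t u : ℤ} (h : myLT t u) : ¬ myLT u t :=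
  fun h' => myLT_irrefl t (myLT_trans h h')

open Classical Finset

/-- rank of `t` in `s`: number of elements of `s` that are `≥ t` in `myLT`. -/
noncomputable def rk (s : Finset ℤ) (t : ℤ) : ℕ :=
  (s.filter (fun u => u = t ∨ myLT t u)).card

/-- the `k` largest elements of `s` under `myLT`. -/
noncomputable def topSet (s : Finset ℤ) (k : ℤ) : Finset ℤ :=
  s.filter (fun t => (rk s t : ℤ) ≤ k)

lemma mem_topSet {s : Finset ℤ} {k t : ℤ} :
    t ∈ topSet s k ↔ t ∈ s ∧ (rk s t : ℤ) ≤ k := by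
  rw [topSet, mem_filter]

lemma topSet_subset (s : Finset ℤ) (k : ℤ) : topSet s k ⊆ s := filter_subset _ _

lemma rk_pos {s : Finset ℤ} {t : ℤ} (h : t ∈ s) : 1 ≤ rk s t := by
  have h1 : t ∈ s.filter (fun u => u = t ∨ myLT t u) := mem_filter.mpr ⟨h, Or.inl rfl⟩
  have h2 := card_pos.mpr ⟨t, h1⟩
  unfold rk; omega

lemma rk_le (s : Finset ℤ) (t : ℤ) : rk s t ≤ s.card := card_filter_le _ _

lemma rk_lt {s : Finset ℤ} {t u : ℤ} (ht : t ∈ s) (h : myLT t u) : rk s u < rk s t := by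
  have htu : t ≠ u := fun he => myLT_irrefl t (he ▸ h)
  have hsub : s.filter (fun v => v = u ∨ myLT u v) ⊆
      (s.filter (fun v => v = t ∨ myLT t v)).erase t := by
    intro v hv
    rw [mem_filter] at hv
    rw [mem_erase, mem_filter]
    rcases hv.2 with rfl | hlt
    · exact ⟨htu.symm, hv.1, Or.inr h⟩
    · refine ⟨fun he => myLT_asymm h (he ▸ hlt), hv.1, Or.inr (myLT_trans h hlt)⟩
  have h1 := card_le_card hsub
  have h2 : t ∈ s.filter (fun v => v = t ∨ myLT t v) := mem_filter.mpr ⟨ht, Or.inl rfl⟩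
  have h3 := card_erase_of_mem h2
  have h4 := rk_pos ht
  unfold rk at *
  omega

lemma rk_inj {s : Finset ℤ} {t u : ℤ} (ht : t ∈ s) (hu : u ∈ s) (h : t ≠ u) :
    rk s t ≠ rk s u := by
  rcases myLT_total h with hl | hl
  · exact Nat.ne_of_gt (rk_lt ht hl)
  · exact Nat.ne_of_lt (rk_lt hu hl)

lemma rk_surj {s : Finset ℤ} {r : ℕ} (h1 : 1 ≤ r) (h2 : r ≤ s.card) :
    ∃ t ∈ s, rk s t = r := by
  have := Finset.surj_on_of_inj_on_of_card_le (s := s) (t := Finset.Icc 1 s.card)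
    (fun t _ => rk s t)
    (fun t ht => by rw [mem_Icc]; exact ⟨rk_pos ht, rk_le s t⟩)
    (fun t u ht hu he => by_contra fun hne => rk_inj ht hu hne he)
    (by rw [Nat.card_Icc]; omega)
  obtain ⟨t, ht, he⟩ := this r (by rw [mem_Icc]; exact ⟨h1, h2⟩)
  exact ⟨t, ht, he.symm⟩

lemma mem_topSet_pivot {s : Finset ℤ} {t₀ t : ℤ} (h0 : t₀ ∈ s) (ht : t ∈ s) :
    (t ∈ topSet s (rk s t₀) ↔ (t = t₀ ∨ myLT t₀ t)) := by
  rw [mem_topSet]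
  constructor
  · rintro ⟨-, hr⟩
    by_cases he : t = t₀
    · exact Or.inl he
    · rcases myLT_total he with hl | hl
      · exfalso; have := rk_lt ht hl; omega
      · exact Or.inr hl
  · rintro (rfl | hl)
    · exact ⟨ht, le_refl _⟩
    · exact ⟨ht, by have := rk_lt h0 hl; omega⟩

lemma topSet_card {s : Finset ℤ} {k : ℤ} (hk : 0 ≤ k) :
    ((topSet s k).card : ℤ) = min k s.card := by
  have hb : (topSet s k).card =
      ((Finset.Icc 1 s.card).filter (fun r : ℕ => (r : ℤ) ≤ k)).card := by
    apply Finset.card_bij (fun t _ => rk s t)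
    · intro t ht
      rw [mem_topSet] at ht
      rw [mem_filter, mem_Icc]
      exact ⟨⟨rk_pos ht.1, rk_le s t⟩, ht.2⟩
    · intro t ht u hu he
      rw [mem_topSet] at ht hu
      exact by_contra fun hne => rk_inj ht.1 hu.1 hne he
    · intro r hr
      rw [mem_filter, mem_Icc] at hr
      obtain ⟨t, ht, he⟩ := rk_surj hr.1.1 hr.1.2
      exact ⟨t, mem_topSet.mpr ⟨ht, by rw [he]; exact hr.2⟩, he⟩
  have h2 : (Finset.Icc 1 s.card).filter (fun r : ℕ => (r : ℤ) ≤ k) =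
      Finset.Icc 1 (min k.toNat s.card) := by
    ext r
    rw [mem_filter, mem_Icc, mem_Icc]
    omega
  rw [hb, h2, Nat.card_Icc]
  omega

/-- key restriction lemma: the top set of `s` intersected with `s' ⊆ s` is a top set of `s'`. -/
lemma topSet_restrict {s s' : Finset ℤ} (hs : s' ⊆ s) (k : ℤ) :
    topSet s k ∩ s' = topSet s' ((topSet s k ∩ s').card) := by
  ext t
  rw [mem_inter, mem_topSet, mem_topSet]
  constructor
  · rintro ⟨⟨hts, hrk⟩, hts'⟩
    refine ⟨hts', ?_⟩
    have hsub : s'.filter (fun u => u = t ∨ myLT t u) ⊆ topSet s k ∩ s' := by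
      intro u hu
      rw [mem_filter] at hu
      rw [mem_inter, mem_topSet]
      rcases hu.2 with rfl | hl
      · exact ⟨⟨hts, hrk⟩, hu.1⟩
      · exact ⟨⟨hs hu.1, by have := rk_lt hts hl; omega⟩, hu.1⟩
    have h1 := card_le_card hsub
    unfold rk
    omega
  · rintro ⟨hts', hrk⟩
    have hts : t ∈ s := hs hts'
    by_contra hc
    have hnot : ¬ ((rk s t : ℤ) ≤ k) := fun hle => hc ⟨⟨hts, hle⟩, hts'⟩
    have hsub : topSet s k ∩ s' ⊆ (s'.filter (fun u => u = t ∨ myLT t u)).erase t := by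
      intro u hu
      rw [mem_inter, mem_topSet] at hu
      obtain ⟨⟨hus, hurk⟩, hus'⟩ := hu
      have hne : u ≠ t := by rintro rfl; exact hnot hurk
      have hl : myLT t u := by
        rcases myLT_total (Ne.symm hne) with hl | hl
        · exact hl
        · exact absurd (by have := rk_lt hus hl; omega : (rk s t : ℤ) ≤ k) hnot
      rw [mem_erase, mem_filter]
      exact ⟨hne, hus', Or.inr hl⟩
    have h1 := card_le_card hsub
    have h2 : t ∈ s'.filter (fun u => u = t ∨ myLT t u) := mem_filter.mpr ⟨hts', Or.inl rfl⟩
    have h3 := card_erase_of_mem h2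
    have h5 : 1 ≤ rk s' t := rk_pos hts'
    unfold rk at *
    omega

/-! ### the monotone staircase segment -/

/-- the set of "up" levels in `[a,b)` for a staircase with `k` up-moves. -/
noncomputable def ups (a b k : ℤ) : Finset ℤ := topSet (Finset.Ico a b) k

/-- number of up-levels strictly below `c`. -/
noncomputable def ucnt (a b k c : ℤ) : ℤ := ((ups a b k ∩ Finset.Ico a c).card : ℤ)

/-- the staircase point at diagonal `s`. -/
noncomputable def ptAt (p q : ℤ × ℤ) (s : ℤ) : ℤ × ℤ :=
  (s - p.2 - ucnt (p.1 + p.2) (q.1 + q.2) (q.2 - p.2) s,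
   p.2 + ucnt (p.1 + p.2) (q.1 + q.2) (q.2 - p.2) s)

/-- digital segment between `p` and `q` when `p.1 ≤ q.1` and `p.2 ≤ q.2`. -/
noncomputable def segNE (p q : ℤ × ℤ) : Set (ℤ × ℤ) :=
  { r | p.1 + p.2 ≤ r.1 + r.2 ∧ r.1 + r.2 ≤ q.1 + q.2 ∧
    r.2 = p.2 + ucnt (p.1 + p.2) (q.1 + q.2) (q.2 - p.2) (r.1 + r.2) }

lemma ups_subset (a b k : ℤ) : ups a b k ⊆ Finset.Ico a b := topSet_subset _ _

lemma ups_card {a b k : ℤ} (hab : a ≤ b) (hk0 : 0 ≤ k) (hk : k ≤ b - a) :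
    ((ups a b k).card : ℤ) = k := by
  rw [ups, topSet_card hk0, Int.card_Ico]
  omega

lemma ucnt_nonneg (a b k c : ℤ) : 0 ≤ ucnt a b k c := Int.ofNat_nonneg _

lemma ucnt_of_le {a b k c : ℤ} (h : c ≤ a) : ucnt a b k c = 0 := by
  rw [ucnt, Finset.Ico_eq_empty (by omega), Finset.inter_empty, Finset.card_empty]
  rfl

lemma ucnt_of_ge {a b k c : ℤ} (hab : a ≤ b) (hk0 : 0 ≤ k) (hk : k ≤ b - a) (h : b ≤ c) :
    ucnt a b k c = k := by
  have : ups a b k ∩ Finset.Ico a c = ups a b k := by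
    apply Finset.inter_eq_left.mpr
    intro t ht
    have := ups_subset a b k ht
    rw [Finset.mem_Ico] at *
    omega
  rw [ucnt, this, ups_card hab hk0 hk]

lemma ucnt_le_len {a b k c : ℤ} : ucnt a b k c ≤ max (c - a) 0 := by
  have h1 : ups a b k ∩ Finset.Ico a c ⊆ Finset.Ico a c := Finset.inter_subset_right
  have h2 := Finset.card_le_card h1
  rw [Int.card_Ico] at h2
  simp only [ucnt]
  omega

lemma ucnt_le_k {a b k c : ℤ} (hk0 : 0 ≤ k) : ucnt a b k c ≤ k := by
  have h2 := Finset.card_le_card (Finset.inter_subset_left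
    (s₁ := ups a b k) (s₂ := Finset.Ico a c))
  have h3 := topSet_card (s := Finset.Ico a b) hk0
  simp only [ucnt]
  simp only [ups] at *
  omega

lemma ucnt_split {a b k c d e : ℤ} (h1 : c ≤ d) (h2 : d ≤ e) :
    ((ups a b k ∩ Finset.Ico c e).card : ℤ) =
      ((ups a b k ∩ Finset.Ico c d).card : ℤ) + ((ups a b k ∩ Finset.Ico d e).card : ℤ) := by
  have hu : Finset.Ico c d ∪ Finset.Ico d e = Finset.Ico c e := Finset.Ico_union_Ico_eq_Ico h1 h2
  have hd : Disjoint (ups a b k ∩ Finset.Ico c d) (ups a b k ∩ Finset.Ico d e) := by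
    apply Finset.disjoint_left.mpr
    intro t ht1 ht2
    rw [Finset.mem_inter, Finset.mem_Ico] at ht1 ht2
    omega
  rw [← hu, Finset.inter_union_distrib_left, Finset.card_union_of_disjoint hd]
  push_cast
  ring

lemma ucnt_sub_le {a b k c : ℤ} (hab : a ≤ b) (hk0 : 0 ≤ k) (hk : k ≤ b - a)
    (hc1 : a ≤ c) (hc2 : c ≤ b) : k - ucnt a b k c ≤ b - c := by
  have hs := ucnt_split (a := a) (b := b) (k := k) hc1 hc2
  have h1 : ups a b k ∩ Finset.Ico a b = ups a b k := Finset.inter_eq_left.mpr (ups_subset a b k)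
  rw [h1] at hs
  have h2 := ups_card hab hk0 hk
  have h3 : ((ups a b k ∩ Finset.Ico c b).card : ℤ) ≤ b - c := by
    have := Finset.card_le_card (Finset.inter_subset_right
      (s₁ := ups a b k) (s₂ := Finset.Ico c b))
    rw [Int.card_Ico] at this
    omega
  simp only [ucnt]
  omega

lemma ucnt_mono {a b k c d : ℤ} (h : c ≤ d) : ucnt a b k c ≤ ucnt a b k d := by
  have : ups a b k ∩ Finset.Ico a c ⊆ ups a b k ∩ Finset.Ico a d := by
    apply Finset.inter_subset_inter_left
    exact Finset.Ico_subset_Ico le_rfl h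
  simp only [ucnt]
  exact_mod_cast Finset.card_le_card this

lemma ucnt_step {a b k c : ℤ} : ucnt a b k (c + 1) ≤ ucnt a b k c + 1 := by
  have hsub : ups a b k ∩ Finset.Ico a (c + 1) ⊆ insert c (ups a b k ∩ Finset.Ico a c) := by
    intro t ht
    rw [Finset.mem_inter, Finset.mem_Ico] at ht
    rw [Finset.mem_insert, Finset.mem_inter, Finset.mem_Ico]
    by_cases he : t = c
    · exact Or.inl he
    · exact Or.inr ⟨ht.1, ht.2.1, by omega⟩
  have h1 := Finset.card_le_card hsub
  have h2 := Finset.card_insert_le c (ups a b k ∩ Finset.Ico a c)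
  simp only [ucnt]
  omega

/-- prefix restriction: the up-set of a prefix subinterval. -/
lemma ups_prefix {a b k c : ℤ} (hc2 : c ≤ b) :
    ups a b k ∩ Finset.Ico a c = ups a c (ucnt a b k c) := by
  have hs : Finset.Ico a c ⊆ Finset.Ico a b := Finset.Ico_subset_Ico le_rfl hc2
  simp only [ups, ucnt]
  exact topSet_restrict hs k

/-- suffix restriction: the up-set of a suffix subinterval. -/
lemma ups_suffix {a b k c : ℤ} (hab : a ≤ b) (hk0 : 0 ≤ k) (hk : k ≤ b - a)
    (hc1 : a ≤ c) (hc2 : c ≤ b) :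
    ups a b k ∩ Finset.Ico c b = ups c b (k - ucnt a b k c) := by
  have hs : Finset.Ico c b ⊆ Finset.Ico a b := Finset.Ico_subset_Ico hc1 le_rfl
  have hres := topSet_restrict (s := Finset.Ico a b) hs k
  have hcard : ((topSet (Finset.Ico a b) k ∩ Finset.Ico c b).card : ℤ) = k - ucnt a b k c := by
    have hsplit := ucnt_split (a := a) (b := b) (k := k) hc1 hc2
    have h1 : ups a b k ∩ Finset.Ico a b = ups a b k := Finset.inter_eq_left.mpr (ups_subset a b k)
    rw [h1] at hsplit
    have h2 := ups_card hab hk0 hk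
    simp only [ucnt]
    simp only [ups] at *
    omega
  simp only [ups] at hres hcard ⊢
  rw [hres, hcard]

/-- prefix congruence for counts. -/
lemma ucnt_prefix_cong {a b k c s : ℤ} (hc2 : c ≤ b) (hs : s ≤ c) :
    ucnt a c (ucnt a b k c) s = ucnt a b k s := by
  have h : ups a c (ucnt a b k c) ∩ Finset.Ico a s = ups a b k ∩ Finset.Ico a s := by
    rw [← ups_prefix hc2, Finset.inter_assoc]
    congr 2
    rw [Finset.inter_eq_right.mpr]
    exact Finset.Ico_subset_Ico le_rfl hs
  show ((ups a c (ucnt a b k c) ∩ Finset.Ico a s).card : ℤ)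
      = ((ups a b k ∩ Finset.Ico a s).card : ℤ)
  rw [h]

/-- suffix congruence for counts. -/
lemma ucnt_suffix_cong {a b k c s : ℤ} (hab : a ≤ b) (hk0 : 0 ≤ k) (hk : k ≤ b - a)
    (hc1 : a ≤ c) (hc2 : c ≤ b) (hs1 : c ≤ s) (hs2 : s ≤ b) :
    ucnt c b (k - ucnt a b k c) s = ucnt a b k s - ucnt a b k c := by
  have h1 : ups c b (k - ucnt a b k c) ∩ Finset.Ico c s = ups a b k ∩ Finset.Ico c s := by
    rw [← ups_suffix hab hk0 hk hc1 hc2, Finset.inter_assoc]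
    congr 2
    rw [Finset.inter_eq_right.mpr]
    exact Finset.Ico_subset_Ico le_rfl hs2
  have h2 := ucnt_split (a := a) (b := b) (k := k) hc1 hs1
  show ((ups c b (k - ucnt a b k c) ∩ Finset.Ico c s).card : ℤ)
      = ucnt a b k s - ucnt a b k c
  rw [h1]
  simp only [ucnt] at h2 ⊢
  omega

/-! ### membership facts for `segNE` -/

lemma segNE_self_mem (p q : ℤ × ℤ) (hx : p.1 ≤ q.1) (hy : p.2 ≤ q.2) : p ∈ segNE p q := by
  refine ⟨le_rfl, by omega, ?_⟩
  rw [ucnt_of_le le_rfl]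
  ring

lemma segNE_other_mem (p q : ℤ × ℤ) (hx : p.1 ≤ q.1) (hy : p.2 ≤ q.2) : q ∈ segNE p q := by
  refine ⟨by omega, le_rfl, ?_⟩
  rw [ucnt_of_ge (by omega) (by omega) (by omega) le_rfl]
  ring

lemma segNE_between {p q r : ℤ × ℤ} (hx : p.1 ≤ q.1) (hy : p.2 ≤ q.2) (hr : r ∈ segNE p q) :
    p.1 ≤ r.1 ∧ r.1 ≤ q.1 ∧ p.2 ≤ r.2 ∧ r.2 ≤ q.2 := by
  obtain ⟨h1, h2, h3⟩ := hr
  have b1 := ucnt_nonneg (p.1 + p.2) (q.1 + q.2) (q.2 - p.2) (r.1 + r.2)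
  have b2 := ucnt_le_k (a := p.1 + p.2) (b := q.1 + q.2) (c := r.1 + r.2) (k := q.2 - p.2)
    (by omega)
  have b3 := ucnt_le_len (a := p.1 + p.2) (b := q.1 + q.2) (c := r.1 + r.2) (k := q.2 - p.2)
  have b4 := ucnt_sub_le (a := p.1 + p.2) (b := q.1 + q.2) (c := r.1 + r.2) (k := q.2 - p.2)
    (by omega) (by omega) (by omega) h1 h2
  omega

/-- (S3), lower-endpoint version, for NE segments. -/
lemma segNE_subseg_low {p q r : ℤ × ℤ} (hx : p.1 ≤ q.1) (hy : p.2 ≤ q.2) (hr : r ∈ segNE p q) :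
    segNE p r ⊆ segNE p q := by
  obtain ⟨h1, h2, h3⟩ := hr
  intro x hxm
  obtain ⟨g1, g2, g3⟩ := hxm
  refine ⟨g1, by omega, ?_⟩
  have hc : r.2 - p.2 = ucnt (p.1 + p.2) (q.1 + q.2) (q.2 - p.2) (r.1 + r.2) := by omega
  rw [hc] at g3
  rw [ucnt_prefix_cong h2 g2] at g3
  exact g3

/-- (S3), upper-endpoint version, for NE segments. -/
lemma segNE_subseg_high {p q r : ℤ × ℤ} (hx : p.1 ≤ q.1) (hy : p.2 ≤ q.2) (hr : r ∈ segNE p q) :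
    segNE r q ⊆ segNE p q := by
  have hbet := segNE_between hx hy hr
  obtain ⟨h1, h2, h3⟩ := hr
  intro x hxm
  obtain ⟨g1, g2, g3⟩ := hxm
  refine ⟨by omega, g2, ?_⟩
  have hc : q.2 - r.2 = (q.2 - p.2) - ucnt (p.1 + p.2) (q.1 + q.2) (q.2 - p.2) (r.1 + r.2) := by
    omega
  rw [hc] at g3
  rw [ucnt_suffix_cong (by omega) (by omega) (by omega) h1 h2 g1 g2] at g3
  omega

/-! ### structural lemmas: paths, extensions, horizontal/vertical segments -/

lemma ptAt_sum (p q : ℤ × ℤ) (s : ℤ) : (ptAt p q s).1 + (ptAt p q s).2 = s := by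
  simp [ptAt]; try ring

lemma mem_segNE_iff {p q r : ℤ × ℤ} :
    r ∈ segNE p q ↔ p.1 + p.2 ≤ r.1 + r.2 ∧ r.1 + r.2 ≤ q.1 + q.2 ∧
      r = ptAt p q (r.1 + r.2) := by
  constructor
  · rintro ⟨h1, h2, h3⟩
    refine ⟨h1, h2, ?_⟩
    rw [ptAt]
    ext
    · simp; omega
    · simpa using h3
  · rintro ⟨h1, h2, h3⟩
    refine ⟨h1, h2, ?_⟩
    conv_lhs => rw [h3]
    rw [ptAt]

lemma ptAt_mem {p q : ℤ × ℤ} {s : ℤ} (h1 : p.1 + p.2 ≤ s) (h2 : s ≤ q.1 + q.2) :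
    ptAt p q s ∈ segNE p q := by
  rw [mem_segNE_iff, ptAt_sum]
  exact ⟨h1, h2, rfl⟩

lemma segNE_path {p q : ℤ × ℤ} (hx : p.1 ≤ q.1) (hy : p.2 ≤ q.2) :
    IsGridPath p q (segNE p q) := by
  refine ⟨((q.1 + q.2) - (p.1 + p.2)).toNat,
    fun j => ptAt p q ((p.1 + p.2) + (j.val : ℤ)), ?_, ?_, ?_, ?_, ?_⟩
  · show ptAt p q ((p.1 + p.2) + ((0 : ℕ) : ℤ)) = p
    rw [ptAt, ucnt_of_le (by omega)]
    ext <;> simp <;> try ring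
  · show ptAt p q ((p.1 + p.2) + (((q.1 + q.2) - (p.1 + p.2)).toNat : ℤ)) = q
    rw [Int.toNat_of_nonneg (by omega)]
    have he : (p.1 + p.2) + ((q.1 + q.2) - (p.1 + p.2)) = q.1 + q.2 := by ring
    rw [he, ptAt, ucnt_of_ge (by omega) (by omega) (by omega) le_rfl]
    ext <;> simp <;> try ring
  · intro i j he
    have h0 := ptAt_sum p q ((p.1 + p.2) + (i.val : ℤ))
    have h1 := ptAt_sum p q ((p.1 + p.2) + (j.val : ℤ))
    have he' : ptAt p q ((p.1 + p.2) + (i.val : ℤ)) = ptAt p q ((p.1 + p.2) + (j.val : ℤ)) := he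
    rw [he'] at h0
    rw [h1] at h0
    have : (i.val : ℤ) = (j.val : ℤ) := by omega
    exact Fin.ext (by exact_mod_cast this)
  · intro i
    set s := (p.1 + p.2) + (i.val : ℤ) with hs
    have hv1 : (i.castSucc.val : ℤ) = (i.val : ℤ) := rfl
    have hv2 : (i.succ.val : ℤ) = (i.val : ℤ) + 1 := by
      simp [Fin.val_succ]
    show GridAdj (ptAt p q ((p.1 + p.2) + (i.castSucc.val : ℤ)))
      (ptAt p q ((p.1 + p.2) + (i.succ.val : ℤ)))
    rw [hv1, hv2, ← hs, ← add_assoc, ← hs]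
    have hm := ucnt_mono (a := p.1 + p.2) (b := q.1 + q.2) (k := q.2 - p.2)
      (c := s) (d := s + 1) (by omega)
    have hst := ucnt_step (a := p.1 + p.2) (b := q.1 + q.2) (k := q.2 - p.2) (c := s)
    rcases (by omega : ucnt (p.1 + p.2) (q.1 + q.2) (q.2 - p.2) (s+1)
        = ucnt (p.1 + p.2) (q.1 + q.2) (q.2 - p.2) s ∨
        ucnt (p.1 + p.2) (q.1 + q.2) (q.2 - p.2) (s+1)
        = ucnt (p.1 + p.2) (q.1 + q.2) (q.2 - p.2) s + 1) with h | h
    · left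
      constructor
      · rw [ptAt, ptAt, h]; simp; try omega
      · rw [ptAt, ptAt, h]
    · right
      constructor
      · rw [ptAt, ptAt, h]; simp; try omega
      · rw [ptAt, ptAt, h]; simp
  · ext r
    constructor
    · rintro ⟨j, rfl⟩
      apply ptAt_mem (by omega)
      have := j.isLt
      have h2 : (j.val : ℤ) ≤ (q.1 + q.2) - (p.1 + p.2) := by
        have h3 : j.val ≤ ((q.1 + q.2) - (p.1 + p.2)).toNat := by omega
        have h4 : (((q.1 + q.2) - (p.1 + p.2)).toNat : ℤ) = (q.1 + q.2) - (p.1 + p.2) :=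
          Int.toNat_of_nonneg (by omega)
        omega
      omega
    · intro hr
      rw [mem_segNE_iff] at hr
      obtain ⟨h1, h2, h3⟩ := hr
      refine ⟨⟨(r.1 + r.2 - (p.1 + p.2)).toNat, by omega⟩, ?_⟩
      have h4 : (p.1 + p.2) + (((r.1 + r.2 - (p.1 + p.2)).toNat : ℤ)) = r.1 + r.2 := by
        rw [Int.toNat_of_nonneg (by omega)]; ring
      show ptAt p q ((p.1 + p.2) + (((r.1 + r.2 - (p.1 + p.2)).toNat : ℤ))) = r
      rw [h4]
      exact h3.symm

lemma ups_zero {a b : ℤ} (hab : a ≤ b) : ups a b 0 = ∅ := by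
  have := ups_card hab le_rfl (by omega)
  rwa [Nat.cast_eq_zero, Finset.card_eq_zero] at this

lemma ucnt_zero {a b c : ℤ} (hab : a ≤ b) : ucnt a b 0 c = 0 := by
  rw [ucnt, ups_zero hab, Finset.empty_inter, Finset.card_empty]
  rfl

lemma ups_full {a b : ℤ} (hab : a ≤ b) : ups a b (b - a) = Finset.Ico a b := by
  ext t
  rw [ups, mem_topSet]
  constructor
  · exact fun h => h.1
  · intro h
    refine ⟨h, ?_⟩
    have h1 := rk_le (Finset.Ico a b) t
    rw [Int.card_Ico] at h1
    omega

lemma ucnt_full {a b c : ℤ} (hc1 : a ≤ c) (hc2 : c ≤ b) : ucnt a b (b - a) c = c - a := by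
  rw [ucnt, ups_full (by omega)]
  rw [Finset.inter_eq_right.mpr (Finset.Ico_subset_Ico le_rfl hc2)]
  rw [Int.card_Ico]
  omega

lemma segNE_horiz {p q : ℤ × ℤ} (hy : p.2 = q.2) (hx : p.1 ≤ q.1) :
    segNE p q = {r : ℤ × ℤ | r.2 = p.2 ∧ p.1 ≤ r.1 ∧ r.1 ≤ q.1} := by
  have hk : q.2 - p.2 = 0 := by omega
  ext r
  simp only [segNE, Set.mem_setOf_eq, hk]
  rw [ucnt_zero (by omega)]
  constructor
  · rintro ⟨h1, h2, h3⟩; omega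
  · rintro ⟨h1, h2, h3⟩; omega

lemma segNE_vert {p q : ℤ × ℤ} (hx : p.1 = q.1) (hy : p.2 ≤ q.2) :
    segNE p q = {r : ℤ × ℤ | r.1 = p.1 ∧ p.2 ≤ r.2 ∧ r.2 ≤ q.2} := by
  have hk : q.2 - p.2 = (q.1 + q.2) - (p.1 + p.2) := by omega
  ext r
  simp only [segNE, Set.mem_setOf_eq, hk]
  constructor
  · rintro ⟨h1, h2, h3⟩
    rw [ucnt_full h1 h2] at h3
    omega
  · rintro ⟨h1, h2, h3⟩
    have h4 : p.1 + p.2 ≤ r.1 + r.2 := by omega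
    have h5 : r.1 + r.2 ≤ q.1 + q.2 := by omega
    refine ⟨h4, h5, ?_⟩
    rw [ucnt_full h4 h5]
    omega

/-! ### extension lemmas (for axiom S4) -/

lemma ups_mono_k {a b k k' : ℤ} (h : k ≤ k') : ups a b k ⊆ ups a b k' := by
  intro t ht
  rw [ups, mem_topSet] at *
  exact ⟨ht.1, le_trans ht.2 h⟩

lemma ucnt_cong_of_inter {a b b' k k' : ℤ} (hb : b ≤ b')
    (h : ups a b' k' ∩ Finset.Ico a b = ups a b k) {s : ℤ} (hs : s ≤ b) :
    ucnt a b' k' s = ucnt a b k s := by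
  show ((ups a b' k' ∩ Finset.Ico a s).card : ℤ) = ((ups a b k ∩ Finset.Ico a s).card : ℤ)
  rw [← h, Finset.inter_assoc]
  congr 3
  rw [Finset.inter_eq_right.mpr (Finset.Ico_subset_Ico le_rfl hs)]

lemma segNE_extend_high {p q : ℤ × ℤ} (hx : p.1 ≤ q.1) (hy : p.2 ≤ q.2) :
    ∃ r : ℤ × ℤ, (p.1 ≤ r.1 ∧ p.2 ≤ r.2) ∧ r ∉ segNE p q ∧ segNE p q ⊆ segNE p r := by
  set a := p.1 + p.2 with ha
  set b := q.1 + q.2 with hb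
  set k := q.2 - p.2 with hk
  by_cases hcase : b ∈ ups a (b + 1) k
  · -- extend upward: r = q + (0,1)
    refine ⟨(q.1, q.2 + 1), ⟨by omega, by omega⟩, ?_, ?_⟩
    · rintro ⟨h1, h2, -⟩
      simp only at h1 h2
      omega
    · have hmem : b ∈ ups a (b + 1) (k + 1) := ups_mono_k (by omega) hcase
      have hkey : ups a (b + 1) (k + 1) ∩ Finset.Ico a b = ups a b k := by
        have h1 := ups_prefix (a := a) (b := b + 1) (k := k + 1) (c := b) (by omega)
        have h2 : ups a (b + 1) (k + 1) ∩ Finset.Ico a b = (ups a (b + 1) (k + 1)).erase b := by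
          ext t
          rw [Finset.mem_inter, Finset.mem_erase, Finset.mem_Ico]
          constructor
          · rintro ⟨ht1, ht2⟩; exact ⟨by omega, ht1⟩
          · rintro ⟨ht1, ht2⟩
            have := ups_subset a (b + 1) (k + 1) ht2
            rw [Finset.mem_Ico] at this
            exact ⟨ht2, by omega⟩
        have h3 : ucnt a (b + 1) (k + 1) b = k := by
          show ((ups a (b + 1) (k + 1) ∩ Finset.Ico a b).card : ℤ) = k
          rw [h2, Finset.card_erase_of_mem hmem]
          have h4 := ups_card (a := a) (b := b + 1) (k := k + 1) (by omega) (by omega) (by omega)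
          have h5 : 1 ≤ (ups a (b + 1) (k + 1)).card := Finset.card_pos.mpr ⟨b, hmem⟩
          push_cast
          omega
        rw [h1, h3]
      intro x hxm
      obtain ⟨g1, g2, g3⟩ := hxm
      refine ⟨g1, by simp only; omega, ?_⟩
      have heq := ucnt_cong_of_inter (by omega) hkey (s := x.1 + x.2) g2
      simp only
      have hb' : (q.1 : ℤ) + (q.2 + 1) = b + 1 := by omega
      have hk' : (q.2 + 1) - p.2 = k + 1 := by omega
      rw [hb', hk', heq]
      exact g3
  · -- extend rightward: r = q + (1,0)
    refine ⟨(q.1 + 1, q.2), ⟨by omega, by omega⟩, ?_, ?_⟩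
    · rintro ⟨h1, h2, -⟩
      simp only at h1 h2
      omega
    · have hkey : ups a (b + 1) k ∩ Finset.Ico a b = ups a b k := by
        have h1 := ups_prefix (a := a) (b := b + 1) (k := k) (c := b) (by omega)
        have h2 : ups a (b + 1) k ∩ Finset.Ico a b = ups a (b + 1) k := by
          apply Finset.inter_eq_left.mpr
          intro t ht
          have := ups_subset a (b + 1) k ht
          rw [Finset.mem_Ico] at *
          have : t ≠ b := fun he => hcase (he ▸ ht)
          omega
        have h3 : ucnt a (b + 1) k b = k := by
          show ((ups a (b + 1) k ∩ Finset.Ico a b).card : ℤ) = k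
          rw [h2]
          exact ups_card (by omega) (by omega) (by omega)
        rw [h1, h3]
      intro x hxm
      obtain ⟨g1, g2, g3⟩ := hxm
      refine ⟨g1, by simp only; omega, ?_⟩
      have heq := ucnt_cong_of_inter (by omega) hkey (s := x.1 + x.2) g2
      simp only
      have hb' : (q.1 + 1 : ℤ) + q.2 = b + 1 := by omega
      have hk' : (q.2 : ℤ) - p.2 = k := by omega
      rw [hb', hk', heq]
      exact g3

lemma segNE_extend_low {p q : ℤ × ℤ} (hx : p.1 ≤ q.1) (hy : p.2 ≤ q.2) :
    ∃ r : ℤ × ℤ, (r.1 ≤ p.1 ∧ r.2 ≤ p.2) ∧ r ∉ segNE p q ∧ segNE p q ⊆ segNE r q := by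
  set a := p.1 + p.2 with ha
  set b := q.1 + q.2 with hb
  set k := q.2 - p.2 with hk
  have hIco : Finset.Ico (a - 1) a = {a - 1} := by
    ext t; rw [Finset.mem_Ico, Finset.mem_singleton]; omega
  by_cases hcase : (a - 1) ∈ ups (a - 1) b k
  · -- extend downward: r = p - (0,1)
    refine ⟨(p.1, p.2 - 1), ⟨by omega, by omega⟩, ?_, ?_⟩
    · rintro ⟨h1, h2, -⟩
      simp only at h1 h2
      omega
    · have hmem : (a - 1) ∈ ups (a - 1) b (k + 1) := ups_mono_k (by omega) hcase
      have hcnt : ucnt (a - 1) b (k + 1) a = 1 := by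
        show ((ups (a - 1) b (k + 1) ∩ Finset.Ico (a - 1) a).card : ℤ) = 1
        rw [hIco]
        rw [Finset.inter_singleton_of_mem hmem, Finset.card_singleton]
        rfl
      have hkey : ups (a - 1) b (k + 1) ∩ Finset.Ico a b = ups a b k := by
        have h1 := ups_suffix (a := a - 1) (b := b) (k := k + 1) (c := a)
          (by omega) (by omega) (by omega) (by omega) (by omega)
        rw [hcnt] at h1
        have : k + 1 - 1 = k := by ring
        rwa [this] at h1
      intro x hxm
      obtain ⟨g1, g2, g3⟩ := hxm
      refine ⟨by simp only; omega, g2, ?_⟩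
      simp only
      have ha' : (p.1 : ℤ) + (p.2 - 1) = a - 1 := by omega
      have hk' : q.2 - (p.2 - 1) = k + 1 := by omega
      rw [ha', hk']
      have hsplit := ucnt_split (a := a - 1) (b := b) (k := k + 1)
        (c := a - 1) (d := a) (e := x.1 + x.2) (by omega) (by omega)
      have heq : ups (a - 1) b (k + 1) ∩ Finset.Ico a (x.1 + x.2)
          = ups a b k ∩ Finset.Ico a (x.1 + x.2) := by
        rw [← hkey, Finset.inter_assoc]
        congr 3
        rw [Finset.inter_eq_right.mpr (Finset.Ico_subset_Ico le_rfl g2)]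
      have hcnt2 : ucnt (a - 1) b (k + 1) (x.1 + x.2) = 1 + ucnt a b k (x.1 + x.2) := by
        show ((ups (a - 1) b (k + 1) ∩ Finset.Ico (a - 1) (x.1 + x.2)).card : ℤ)
          = 1 + ((ups a b k ∩ Finset.Ico a (x.1 + x.2)).card : ℤ)
        rw [← heq]
        have h5 : ((ups (a - 1) b (k + 1) ∩ Finset.Ico (a - 1) a).card : ℤ) = 1 := hcnt
        omega
      rw [hcnt2]
      rw [← ha, ← hb, ← hk] at g3
      omega
  · -- extend leftward: r = p - (1,0)
    refine ⟨(p.1 - 1, p.2), ⟨by omega, by omega⟩, ?_, ?_⟩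
    · rintro ⟨h1, h2, -⟩
      simp only at h1 h2
      omega
    · have hcnt : ucnt (a - 1) b k a = 0 := by
        show ((ups (a - 1) b k ∩ Finset.Ico (a - 1) a).card : ℤ) = 0
        rw [hIco]
        have : ups (a - 1) b k ∩ {a - 1} = ∅ := by
          rw [Finset.inter_singleton_of_notMem hcase]
        rw [this]
        rfl
      have hkey : ups (a - 1) b k ∩ Finset.Ico a b = ups a b k := by
        have h1 := ups_suffix (a := a - 1) (b := b) (k := k) (c := a)
          (by omega) (by omega) (by omega) (by omega) (by omega)
        rw [hcnt] at h1
        have : k - 0 = k := by ring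
        rwa [this] at h1
      intro x hxm
      obtain ⟨g1, g2, g3⟩ := hxm
      refine ⟨by simp only; omega, g2, ?_⟩
      simp only
      have ha' : (p.1 - 1 : ℤ) + p.2 = a - 1 := by omega
      have hk' : (q.2 : ℤ) - p.2 = k := by omega
      rw [ha', hk']
      have hsplit := ucnt_split (a := a - 1) (b := b) (k := k)
        (c := a - 1) (d := a) (e := x.1 + x.2) (by omega) (by omega)
      have heq : ups (a - 1) b k ∩ Finset.Ico a (x.1 + x.2)
          = ups a b k ∩ Finset.Ico a (x.1 + x.2) := by
        rw [← hkey, Finset.inter_assoc]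
        congr 3
        rw [Finset.inter_eq_right.mpr (Finset.Ico_subset_Ico le_rfl g2)]
      have hcnt2 : ucnt (a - 1) b k (x.1 + x.2) = ucnt a b k (x.1 + x.2) := by
        show ((ups (a - 1) b k ∩ Finset.Ico (a - 1) (x.1 + x.2)).card : ℤ)
          = ((ups a b k ∩ Finset.Ico a (x.1 + x.2)).card : ℤ)
        rw [← heq]
        have h5 : ((ups (a - 1) b k ∩ Finset.Ico (a - 1) a).card : ℤ) = 0 := hcnt
        omega
      rw [hcnt2]
      rw [← ha, ← hb, ← hk] at g3
      omega

open Finset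

lemma two_pow_pos (i : ℕ) : (0 : ℤ) < 2 ^ i := by positivity

lemma emod_pow_nonneg (x : ℤ) (i : ℕ) : 0 ≤ x % 2 ^ i :=
  Int.emod_nonneg x (by positivity)

lemma emod_pow_lt (x : ℤ) (i : ℕ) : x % 2 ^ i < 2 ^ i :=
  Int.emod_lt_of_pos x (two_pow_pos i)

lemma mod_split (x : ℤ) (i : ℕ) :
    x % 2 ^ (i + 1) = x % 2 ^ i ∨ x % 2 ^ (i + 1) = x % 2 ^ i + 2 ^ i := by
  have h1 : x % 2 ^ (i + 1) % 2 ^ i = x % 2 ^ i := emod_pow_le x (Nat.le_succ i)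
  have hd : (2 : ℤ) ^ i ∣ (x % 2 ^ (i + 1) - x % 2 ^ i) := by
    have : x % 2 ^ (i + 1) % 2 ^ i = x % 2 ^ i % 2 ^ i := by
      rw [h1, Int.emod_emod_of_dvd _ dvd_rfl]
    exact Int.ModEq.dvd (Int.ModEq.symm this)
  obtain ⟨d, hd⟩ := hd
  have hA0 := emod_pow_nonneg x (i + 1)
  have hA1 := emod_pow_lt x (i + 1)
  have hs0 := emod_pow_nonneg x i
  have hs1 := emod_pow_lt x i
  have hp := two_pow_pos i
  have hpow : (2 : ℤ) ^ (i + 1) = 2 ^ i * 2 := by ring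
  rw [hpow] at hA1
  have hd0 : 0 ≤ d := by
    by_contra hneg
    have h2 : d ≤ -1 := by omega
    have h3 : 2 ^ i * d ≤ 2 ^ i * (-1 : ℤ) := by
      exact mul_le_mul_of_nonneg_left h2 hp.le
    omega
  have hd1 : d ≤ 1 := by
    by_contra hbig
    have h2 : (2 : ℤ) ≤ d := by omega
    have h3 : 2 ^ i * 2 ≤ 2 ^ i * d := mul_le_mul_of_nonneg_left h2 hp.le
    omega
  rcases (by omega : d = 0 ∨ d = 1) with rfl | rfl
  · left; omega
  · right; omega

/-- the AP-predicate for level `i`: the `i`-th bit of `t₀` is 0 and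
`t` agrees with `t₀` below bit `i` and has bit `i` equal to 1. -/
def Qp (t₀ : ℤ) (i : ℕ) (t : ℤ) : Prop :=
  t₀ % 2 ^ (i + 1) = t₀ % 2 ^ i ∧ t % 2 ^ (i + 1) = t₀ % 2 ^ i + 2 ^ i

lemma myLT_char {t₀ t : ℤ} : myLT t₀ t ↔ ∃ i : ℕ, Qp t₀ i t := by
  constructor
  · rintro ⟨i, h1, h2⟩
    refine ⟨i, ?_, ?_⟩
    · rcases mod_split t₀ i with h | h
      · exact h
      · exfalso
        rcases mod_split t i with h' | h'
        · have hp := two_pow_pos i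
          omega
        · omega
    · rcases mod_split t i with h' | h'
      · exfalso
        rcases mod_split t₀ i with h | h
        · omega
        · have hp := two_pow_pos i
          omega
      · omega
  · rintro ⟨i, q1, q2⟩
    have hse : (t₀ % 2 ^ i + 2 ^ i) % 2 ^ i = t₀ % 2 ^ i := by
      have h1 : t₀ % 2 ^ i + 2 ^ i = t₀ % 2 ^ i + 2 ^ i * 1 := by ring
      rw [h1, Int.add_mul_emod_self_left, Int.emod_emod_of_dvd _ dvd_rfl]
    refine ⟨i, ?_, ?_⟩
    · rw [← emod_pow_le t₀ (Nat.le_succ i), ← emod_pow_le t (Nat.le_succ i), q1, q2, hse]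
      exact Int.emod_emod_of_dvd _ dvd_rfl
    · rw [q1, q2]
      have hp := two_pow_pos i
      omega

lemma Qp_high_mod {t₀ t : ℤ} {B i : ℕ} (hBi : B ≤ i) (hq : Qp t₀ i t) :
    t % 2 ^ B = t₀ % 2 ^ B := by
  obtain ⟨c, hc⟩ : (2 : ℤ) ^ B ∣ 2 ^ i := pow_dvd_pow 2 hBi
  calc t % 2 ^ B = t % 2 ^ (i + 1) % 2 ^ B := (emod_pow_le t (by omega)).symm
    _ = (t₀ % 2 ^ i + 2 ^ i) % 2 ^ B := by rw [hq.2]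
    _ = t₀ % 2 ^ i % 2 ^ B := by rw [hc, Int.add_mul_emod_self_left]
    _ = t₀ % 2 ^ B := emod_pow_le t₀ hBi

lemma Qp_disjoint {t₀ t : ℤ} {i j : ℕ} (hij : i < j) (hi : Qp t₀ i t) (hj : Qp t₀ j t) :
    False := by
  have h1 : t % 2 ^ (i + 1) = t₀ % 2 ^ (i + 1) := by
    obtain ⟨c, hc⟩ : (2 : ℤ) ^ (i + 1) ∣ 2 ^ j := pow_dvd_pow 2 (by omega)
    calc t % 2 ^ (i + 1) = t % 2 ^ (j + 1) % 2 ^ (i + 1) := (emod_pow_le t (by omega)).symm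
      _ = (t₀ % 2 ^ j + 2 ^ j) % 2 ^ (i + 1) := by rw [hj.2]
      _ = t₀ % 2 ^ j % 2 ^ (i + 1) := by rw [hc, Int.add_mul_emod_self_left]
      _ = t₀ % 2 ^ (i + 1) := emod_pow_le t₀ (by omega)
  have h2 := hi.2
  have h3 := hi.1
  have hp := two_pow_pos i
  omega

lemma Qp_ne_pivot {t₀ : ℤ} {i : ℕ} (h : Qp t₀ i t₀) : False := by
  have hp := two_pow_pos i
  have h1 := h.1
  have h2 := h.2
  omega

/-! ### counting arithmetic progressions in intervals -/

lemma ap_window {M : ℤ} (hM : 0 < M) (ρ x : ℤ) :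
    (Finset.Ico x (x + M)).filter (fun t => t % M = ρ % M) = {x + (ρ - x) % M} := by
  have hu_mem : x + (ρ - x) % M ∈ (Finset.Ico x (x + M)).filter (fun t => t % M = ρ % M) := by
    rw [mem_filter, mem_Ico]
    have h0 := Int.emod_nonneg (ρ - x) hM.ne'
    have h1 := Int.emod_lt_of_pos (ρ - x) hM
    refine ⟨⟨by omega, by omega⟩, ?_⟩
    have hdef : (ρ - x) % M = ρ - x - M * ((ρ - x) / M) := Int.emod_def (ρ - x) M
    have : x + (ρ - x) % M = ρ + M * (-((ρ - x) / M)) := by rw [hdef]; ring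
    rw [this, Int.add_mul_emod_self_left]
  ext t
  rw [mem_singleton]
  constructor
  · intro ht
    rw [mem_filter, mem_Ico] at ht
    rw [mem_filter, mem_Ico] at hu_mem
    have hdvd : M ∣ t - (x + (ρ - x) % M) := by
      have : t % M = (x + (ρ - x) % M) % M := by rw [ht.2, hu_mem.2]
      exact Int.ModEq.dvd (Int.ModEq.symm this)
    have habs : |t - (x + (ρ - x) % M)| < M := by
      rw [abs_lt]
      omega
    have := Int.eq_zero_of_abs_lt_dvd hdvd habs
    omega
  · rintro rfl
    exact hu_mem

lemma ap_count_nat {M : ℤ} (hM : 0 < M) (ρ : ℤ) :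
    ∀ n : ℕ, ∀ x : ℤ,
      |M * (((Finset.Ico x (x + (n : ℤ))).filter (fun t => t % M = ρ % M)).card : ℤ) - n| < M := by
  intro n
  induction n using Nat.strong_induction_on with
  | _ n ih =>
    intro x
    by_cases hn : (n : ℤ) < M
    · set c := ((Finset.Ico x (x + (n : ℤ))).filter (fun t => t % M = ρ % M)).card with hc
      have hc1 : c ≤ 1 := by
        rw [hc]
        apply Finset.card_le_one.mpr
        intro t ht u hu
        rw [mem_filter, mem_Ico] at ht hu
        have hdvd : M ∣ t - u := by
          have : t % M = u % M := by rw [ht.2, hu.2]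
          exact Int.ModEq.dvd (Int.ModEq.symm this)
        have habs : |t - u| < M := by rw [abs_lt]; omega
        have := Int.eq_zero_of_abs_lt_dvd hdvd habs
        omega
      have hpos : c = 1 → 1 ≤ n := by
        intro h1
        have : 0 < c := by omega
        rw [hc, Finset.card_pos] at this
        obtain ⟨t, ht⟩ := this
        rw [mem_filter, mem_Ico] at ht
        omega
      rcases (by omega : c = 0 ∨ c = 1) with h | h
      · rw [h, abs_lt]
        push_cast
        omega
      · have := hpos h
        rw [h, abs_lt]
        push_cast
        omega
    · push_neg at hn
      have hM1 : 1 ≤ M := hM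
      have hMn : M.toNat ≤ n := by omega
      have hMt : (M.toNat : ℤ) = M := Int.toNat_of_nonneg hM.le
      set n' := n - M.toNat with hn'
      have hn'lt : n' < n := by omega
      have hsplit : Finset.Ico x (x + (n : ℤ)) =
          Finset.Ico x (x + M) ∪ Finset.Ico (x + M) (x + (n : ℤ)) :=
        (Finset.Ico_union_Ico_eq_Ico (by omega) (by omega)).symm
      have hdisj : Disjoint ((Finset.Ico x (x + M)).filter (fun t => t % M = ρ % M))
          ((Finset.Ico (x + M) (x + (n : ℤ))).filter (fun t => t % M = ρ % M)) := by
        apply Finset.disjoint_left.mpr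
        intro t ht hu
        rw [mem_filter, mem_Ico] at ht hu
        omega
      have hcard : ((Finset.Ico x (x + (n : ℤ))).filter (fun t => t % M = ρ % M)).card =
          1 + ((Finset.Ico (x + M) (x + (n : ℤ))).filter (fun t => t % M = ρ % M)).card := by
        rw [hsplit, Finset.filter_union, Finset.card_union_of_disjoint hdisj,
          ap_window hM ρ x, Finset.card_singleton]
      have hrw : x + (n : ℤ) = (x + M) + (n' : ℤ) := by
        push_cast
        omega
      have hih := ih n' hn'lt (x + M)
      rw [← hrw] at hih
      rw [hcard]
      have harith : M * ((1 : ℤ) + (((Finset.Ico (x + M) (x + (n : ℤ))).filter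
          (fun t => t % M = ρ % M)).card : ℤ)) - n
          = M * (((Finset.Ico (x + M) (x + (n : ℤ))).filter
          (fun t => t % M = ρ % M)).card : ℤ) - (n' : ℤ) := by
        push_cast
        ring_nf
        omega
      push_cast
      push_cast at harith
      rw [harith]
      exact hih

lemma ap_count {M : ℤ} (hM : 0 < M) (ρ x y : ℤ) (hxy : x ≤ y) :
    |M * (((Finset.Ico x y).filter (fun t => t % M = ρ % M)).card : ℤ) - (y - x)| < M := by
  have h := ap_count_nat hM ρ (y - x).toNat x
  have h2 : x + ((y - x).toNat : ℤ) = y := by omega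
  rw [h2] at h
  have h3 : (((y - x).toNat : ℤ)) = y - x := by omega
  rw [h3] at h
  exact h

/-! ### the discrepancy bound for `ucnt` -/

lemma hpair_aux {n m i1 i2 : ℤ} (hn : 0 ≤ n) (hm : 0 ≤ m) (hmn : m ≤ n)
    (g1 : 0 ≤ i1) (g2 : i1 ≤ 1) (g3 : 0 ≤ i2) (g4 : i2 ≤ 1) :
    |n * i1 - m * i2| ≤ n := by
  rcases (by omega : i1 = 0 ∨ i1 = 1) with rfl | rfl <;>
    rcases (by omega : i2 = 0 ∨ i2 = 1) with rfl | rfl <;>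
    · rw [abs_le]; constructor <;> nlinarith

lemma abs_pair_le {n m g1 g2 M : ℤ} (hM : 0 < M) (hn : 0 ≤ n) (hm : 0 ≤ m) (hmn : m ≤ n)
    (h1 : |M * g1 - m| < M) (h2 : |M * g2 - n| < M) :
    |n * g1 - m * g2| ≤ 2 * n := by
  have key : M * (n * g1 - m * g2) = n * (M * g1 - m) - m * (M * g2 - n) := by ring
  have hb : |M * (n * g1 - m * g2)| ≤ n * (M - 1) + m * (M - 1) := by
    rw [key]
    calc |n * (M * g1 - m) - m * (M * g2 - n)|
        ≤ |n * (M * g1 - m)| + |m * (M * g2 - n)| := abs_sub _ _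
      _ = n * |M * g1 - m| + m * |M * g2 - n| := by
          rw [abs_mul, abs_mul, abs_of_nonneg hn, abs_of_nonneg hm]
      _ ≤ n * (M - 1) + m * (M - 1) := by
          have e1 : |M * g1 - m| ≤ M - 1 := by omega
          have e2 : |M * g2 - n| ≤ M - 1 := by omega
          have := mul_le_mul_of_nonneg_left e1 hn
          have := mul_le_mul_of_nonneg_left e2 hm
          omega
  rw [abs_mul, abs_of_pos hM] at hb
  by_contra hcon
  push_neg at hcon
  have h3 : 2 * n + 1 ≤ |n * g1 - m * g2| := by omega
  have h4 : M * (2 * n + 1) ≤ M * |n * g1 - m * g2| := mul_le_mul_of_nonneg_left h3 hM.le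
  nlinarith

open Classical in
lemma disc {a b k c : ℤ} {B : ℕ} (hc1 : a ≤ c) (hc2 : c ≤ b) (hk0 : 0 ≤ k) (hk : k ≤ b - a)
    (hB : b - a ≤ 2 ^ B) :
    |(b - a) * ucnt a b k c - (c - a) * k| ≤ (b - a) * (2 * (B : ℤ) + 4) := by
  rcases eq_or_lt_of_le hk0 with hk0' | hk1
  · rw [← hk0', ucnt_zero (by omega)]
    simp only [mul_zero, sub_zero, abs_zero]
    exact mul_nonneg (by omega) (by positivity)
  · have hn1 : 1 ≤ b - a := by omega
    have hcardI : (Finset.Ico a b).card = (b - a).toNat := Int.card_Ico a b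
    obtain ⟨t₀, ht₀I, ht₀rk⟩ := rk_surj (s := Finset.Ico a b) (r := k.toNat)
      (by omega) (by rw [hcardI]; omega)
    have hups : ups a b k = (Finset.Ico a b).filter (fun t => t = t₀ ∨ myLT t₀ t) := by
      ext t
      by_cases hts : t ∈ Finset.Ico a b
      · have hkk : ((rk (Finset.Ico a b) t₀ : ℕ) : ℤ) = k := by rw [ht₀rk]; omega
        rw [ups, ← hkk, mem_topSet_pivot ht₀I hts, Finset.mem_filter]
        exact ⟨fun h => ⟨hts, h⟩, fun h => h.2⟩
      · rw [ups, mem_topSet, Finset.mem_filter]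
        tauto
    have hucnt : ucnt a b k c
        = (((Finset.Ico a c).filter (fun t => t = t₀ ∨ myLT t₀ t)).card : ℤ) := by
      show ((ups a b k ∩ Finset.Ico a c).card : ℤ) = _
      congr 2
      rw [hups]
      ext t
      rw [Finset.mem_inter, Finset.mem_filter, Finset.mem_filter, Finset.mem_Ico, Finset.mem_Ico]
      constructor
      · rintro ⟨⟨h1, h2⟩, h3⟩; exact ⟨h3, h2⟩
      · rintro ⟨h1, h2⟩
        exact ⟨⟨⟨h1.1, by omega⟩, h2⟩, h1⟩
    have hkf : k = (((Finset.Ico a b).filter (fun t => t = t₀ ∨ myLT t₀ t)).card : ℤ) := by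
      rw [← hups]
      exact (ups_card (by omega) hk0 hk).symm
    -- decomposition of the count into dyadic AP classes
    have decomp : ∀ x y : ℤ, y - x ≤ 2 ^ B →
        (((Finset.Ico x y).filter (fun t => t = t₀ ∨ myLT t₀ t)).card : ℤ)
          = (((Finset.Ico x y).filter (fun t => t = t₀)).card : ℤ)
            + (∑ i ∈ Finset.range B, (((Finset.Ico x y).filter (Qp t₀ i)).card : ℤ))
            + (((Finset.Ico x y).filter (fun t => ∃ j : ℕ, B ≤ j ∧ Qp t₀ j t)).card : ℤ) := by
      intro x y _
      have hset : (Finset.Ico x y).filter (fun t => t = t₀ ∨ myLT t₀ t)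
          = (((Finset.Ico x y).filter (fun t => t = t₀))
              ∪ ((Finset.range B).biUnion (fun i => (Finset.Ico x y).filter (Qp t₀ i))))
            ∪ (Finset.Ico x y).filter (fun t => ∃ j : ℕ, B ≤ j ∧ Qp t₀ j t) := by
        ext t
        simp only [Finset.mem_union, Finset.mem_biUnion, Finset.mem_filter, Finset.mem_range]
        constructor
        · rintro ⟨hts, rfl | hlt⟩
          · exact Or.inl (Or.inl ⟨hts, rfl⟩)
          · rw [myLT_char] at hlt
            obtain ⟨i, hi⟩ := hlt
            by_cases hiB : i < B
            · exact Or.inl (Or.inr ⟨i, hiB, hts, hi⟩)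
            · exact Or.inr ⟨hts, i, by omega, hi⟩
        · rintro ((⟨hts, rfl⟩ | ⟨i, _, hts, hQ⟩) | ⟨hts, i, _, hQ⟩)
          · exact ⟨hts, Or.inl rfl⟩
          · exact ⟨hts, Or.inr (myLT_char.mpr ⟨i, hQ⟩)⟩
          · exact ⟨hts, Or.inr (myLT_char.mpr ⟨i, hQ⟩)⟩
      have hd1 : Disjoint ((Finset.Ico x y).filter (fun t => t = t₀))
          ((Finset.range B).biUnion (fun i => (Finset.Ico x y).filter (Qp t₀ i))) := by
        rw [Finset.disjoint_left]
        rintro t ht hu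
        rw [Finset.mem_filter] at ht
        rw [Finset.mem_biUnion] at hu
        obtain ⟨i, _, hi⟩ := hu
        rw [Finset.mem_filter] at hi
        exact Qp_ne_pivot (ht.2 ▸ hi.2)
      have hd2 : Disjoint (((Finset.Ico x y).filter (fun t => t = t₀))
            ∪ ((Finset.range B).biUnion (fun i => (Finset.Ico x y).filter (Qp t₀ i))))
          ((Finset.Ico x y).filter (fun t => ∃ j : ℕ, B ≤ j ∧ Qp t₀ j t)) := by
        rw [Finset.disjoint_left]
        rintro t ht hu
        rw [Finset.mem_filter] at hu
        obtain ⟨-, j, hjB, hQj⟩ := hu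
        rw [Finset.mem_union] at ht
        rcases ht with ht | ht
        · rw [Finset.mem_filter] at ht
          exact Qp_ne_pivot (ht.2 ▸ hQj)
        · rw [Finset.mem_biUnion] at ht
          obtain ⟨i, hiB, hi⟩ := ht
          rw [Finset.mem_filter, Finset.mem_range] at *
          exact Qp_disjoint (by omega) hi.2 hQj
      have hd3 : ∀ i ∈ Finset.range B, ∀ j ∈ Finset.range B, i ≠ j →
          Disjoint ((Finset.Ico x y).filter (Qp t₀ i)) ((Finset.Ico x y).filter (Qp t₀ j)) := by
        intro i _ j _ hij
        rw [Finset.disjoint_left]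
        rintro t ht hu
        rw [Finset.mem_filter] at ht hu
        rcases Nat.lt_or_ge i j with h | h
        · exact Qp_disjoint h ht.2 hu.2
        · exact Qp_disjoint (by omega) hu.2 ht.2
      rw [hset, Finset.card_union_of_disjoint hd2, Finset.card_union_of_disjoint hd1,
        Finset.card_biUnion hd3]
      push_cast
      ring
    -- single-element bounds
    have hind : ∀ x y : ℤ, (((Finset.Ico x y).filter (fun t => t = t₀)).card : ℤ) ≤ 1 := by
      intro x y
      have : ((Finset.Ico x y).filter (fun t => t = t₀)).card ≤ 1 := by
        apply Finset.card_le_one.mpr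
        intro s hs u hu
        rw [Finset.mem_filter] at hs hu
        rw [hs.2, hu.2]
      exact_mod_cast this
    have htail : ∀ x y : ℤ, y - x ≤ 2 ^ B →
        (((Finset.Ico x y).filter (fun t => ∃ j : ℕ, B ≤ j ∧ Qp t₀ j t)).card : ℤ) ≤ 1 := by
      intro x y hxy
      have : ((Finset.Ico x y).filter (fun t => ∃ j : ℕ, B ≤ j ∧ Qp t₀ j t)).card ≤ 1 := by
        apply Finset.card_le_one.mpr
        intro s hs u hu
        rw [Finset.mem_filter, Finset.mem_Ico] at hs hu
        obtain ⟨hsI, js, hjs, hQs⟩ := hs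
        obtain ⟨huI, ju, hju, hQu⟩ := hu
        have h1 := Qp_high_mod hjs hQs
        have h2 := Qp_high_mod hju hQu
        have hdvd : (2 : ℤ) ^ B ∣ s - u := by
          have : s % 2 ^ B = u % 2 ^ B := by rw [h1, h2]
          exact Int.ModEq.dvd (Int.ModEq.symm this)
        have habs : |s - u| < 2 ^ B := by rw [abs_lt]; omega
        have := Int.eq_zero_of_abs_lt_dvd hdvd habs
        omega
      exact_mod_cast this
    -- per-level bound
    have hper : ∀ i ∈ Finset.range B,
        |(b - a) * (((Finset.Ico a c).filter (Qp t₀ i)).card : ℤ)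
          - (c - a) * (((Finset.Ico a b).filter (Qp t₀ i)).card : ℤ)| ≤ 2 * (b - a) := by
      intro i _
      by_cases hbit : t₀ % 2 ^ (i + 1) = t₀ % 2 ^ i
      · set M := (2 : ℤ) ^ (i + 1) with hM
        have hMpos : 0 < M := two_pow_pos (i + 1)
        set ρ := t₀ % 2 ^ i + 2 ^ i with hρ
        have hρmod : ρ % M = ρ := by
          apply Int.emod_eq_of_lt
          · have h1' := emod_pow_nonneg t₀ i
            have h2' := two_pow_pos i
            omega
          · have h1' := emod_pow_lt t₀ i
            have h2' : (2:ℤ) ^ (i+1) = 2 ^ i * 2 := by ring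
            rw [hM]
            omega
        have hfeq : ∀ x y : ℤ, (Finset.Ico x y).filter (Qp t₀ i)
            = (Finset.Ico x y).filter (fun t => t % M = ρ % M) := by
          intro x y
          apply Finset.filter_congr
          intro t _
          rw [hρmod]
          constructor
          · intro hq; exact hq.2
          · intro hq; exact ⟨hbit, hq⟩
        have h1 := ap_count hMpos ρ a c hc1
        have h2 := ap_count hMpos ρ a b (by omega)
        rw [hfeq, hfeq]
        exact abs_pair_le hMpos (by omega) (by omega) (by omega) h1 h2
      · have hemp : ∀ x y : ℤ, (Finset.Ico x y).filter (Qp t₀ i) = ∅ := by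
          intro x y
          apply Finset.filter_false_of_mem
          intro t _
          exact fun hq => hbit hq.1
        rw [hemp, hemp]
        simp only [Finset.card_empty, Nat.cast_zero, mul_zero, sub_zero, abs_zero]
        omega
    -- assemble
    rw [hucnt, hkf]
    have e1 := decomp a c (by omega)
    have e2 := decomp a b (by omega)
    set S := ∑ i ∈ Finset.range B,
        ((b - a) * (((Finset.Ico a c).filter (Qp t₀ i)).card : ℤ)
          - (c - a) * (((Finset.Ico a b).filter (Qp t₀ i)).card : ℤ)) with hS
    have hsum : (b - a) * (((Finset.Ico a c).filter (fun t => t = t₀ ∨ myLT t₀ t)).card : ℤ)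
        - (c - a) * (((Finset.Ico a b).filter (fun t => t = t₀ ∨ myLT t₀ t)).card : ℤ)
        = S + ((b - a) * (((Finset.Ico a c).filter (fun t => t = t₀)).card : ℤ)
              - (c - a) * (((Finset.Ico a b).filter (fun t => t = t₀)).card : ℤ))
          + ((b - a) * (((Finset.Ico a c).filter (fun t => ∃ j : ℕ, B ≤ j ∧ Qp t₀ j t)).card : ℤ)
              - (c - a) * (((Finset.Ico a b).filter
                  (fun t => ∃ j : ℕ, B ≤ j ∧ Qp t₀ j t)).card : ℤ)) := by
      rw [e1, e2, hS, Finset.sum_sub_distrib, ← Finset.mul_sum, ← Finset.mul_sum]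
      ring
    rw [hsum]
    have habs1 : |S| ≤ (B : ℤ) * (2 * (b - a)) := by
      rw [hS]
      calc |∑ i ∈ Finset.range B,
          ((b - a) * (((Finset.Ico a c).filter (Qp t₀ i)).card : ℤ)
            - (c - a) * (((Finset.Ico a b).filter (Qp t₀ i)).card : ℤ))|
          ≤ ∑ i ∈ Finset.range B,
            |(b - a) * (((Finset.Ico a c).filter (Qp t₀ i)).card : ℤ)
              - (c - a) * (((Finset.Ico a b).filter (Qp t₀ i)).card : ℤ)| :=
            Finset.abs_sum_le_sum_abs _ _
        _ ≤ (Finset.range B).card • (2 * (b - a)) := Finset.sum_le_card_nsmul _ _ _ hper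
        _ = (B : ℤ) * (2 * (b - a)) := by rw [Finset.card_range, nsmul_eq_mul]
    have habs2 := hpair_aux (n := b - a) (m := c - a) (by omega) (by omega) (by omega)
      (Int.ofNat_nonneg _) (hind a c) (Int.ofNat_nonneg _) (hind a b)
    have habs3 := hpair_aux (n := b - a) (m := c - a) (by omega) (by omega) (by omega)
      (Int.ofNat_nonneg _) (htail a c (by omega)) (Int.ofNat_nonneg _) (htail a b (by omega))
    have t1 := abs_add_le (S + ((b - a) * (((Finset.Ico a c).filter (fun t => t = t₀)).card : ℤ)
              - (c - a) * (((Finset.Ico a b).filter (fun t => t = t₀)).card : ℤ)))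
          ((b - a) * (((Finset.Ico a c).filter (fun t => ∃ j : ℕ, B ≤ j ∧ Qp t₀ j t)).card : ℤ)
              - (c - a) * (((Finset.Ico a b).filter
                  (fun t => ∃ j : ℕ, B ≤ j ∧ Qp t₀ j t)).card : ℤ))
    have t2 := abs_add_le S ((b - a) * (((Finset.Ico a c).filter (fun t => t = t₀)).card : ℤ)
              - (c - a) * (((Finset.Ico a b).filter (fun t => t = t₀)).card : ℤ))
    have expand : (b - a) * (2 * (B : ℤ) + 4) = (B : ℤ) * (2 * (b - a)) + 4 * (b - a) := by
      ring
    omega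

open Metric Real

lemma dist_le_coord (x y : EuclideanSpace ℝ (Fin 2)) :
    dist x y ≤ |x 0 - y 0| + |x 1 - y 1| := by
  rw [EuclideanSpace.dist_eq, Fin.sum_univ_two]
  have h0 : (0:ℝ) ≤ |x 0 - y 0| := abs_nonneg _
  have h1 : (0:ℝ) ≤ |x 1 - y 1| := abs_nonneg _
  rw [Real.dist_eq, Real.dist_eq]
  have : |x 0 - y 0| ^ 2 + |x 1 - y 1| ^ 2 ≤ (|x 0 - y 0| + |x 1 - y 1|) ^ 2 := by nlinarith
  calc Real.sqrt (|x 0 - y 0| ^ 2 + |x 1 - y 1| ^ 2)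
      ≤ Real.sqrt ((|x 0 - y 0| + |x 1 - y 1|) ^ 2) := Real.sqrt_le_sqrt this
    _ = |x 0 - y 0| + |x 1 - y 1| := Real.sqrt_sq (by positivity)

lemma coord_le_dist (x y : EuclideanSpace ℝ (Fin 2)) :
    |x 0 - y 0| ≤ dist x y ∧ |x 1 - y 1| ≤ dist x y := by
  rw [EuclideanSpace.dist_eq, Fin.sum_univ_two, Real.dist_eq, Real.dist_eq]
  constructor
  · calc |x 0 - y 0| = Real.sqrt (|x 0 - y 0| ^ 2) := (Real.sqrt_sq (abs_nonneg _)).symm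
      _ ≤ _ := Real.sqrt_le_sqrt (by nlinarith [sq_nonneg (|x 1 - y 1|), sq_abs (x 1 - y 1)])
  · calc |x 1 - y 1| = Real.sqrt (|x 1 - y 1| ^ 2) := (Real.sqrt_sq (abs_nonneg _)).symm
      _ ≤ _ := Real.sqrt_le_sqrt (by nlinarith [sq_nonneg (|x 0 - y 0|), sq_abs (x 0 - y 0)])

lemma toR2_0 (p : ℤ × ℤ) : toR2 p 0 = (p.1 : ℝ) := rfl
lemma toR2_1 (p : ℤ × ℤ) : toR2 p 1 = (p.2 : ℝ) := rfl

lemma segNE_hausdorff {p q : ℤ × ℤ} (hx : p.1 ≤ q.1) (hy : p.2 ≤ q.2) {B : ℕ}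
    (hn1 : 1 ≤ q.1 + q.2 - (p.1 + p.2))
    (hB : q.1 + q.2 - (p.1 + p.2) ≤ 2 ^ B) :
    Metric.hausdorffDist (segment ℝ (toR2 p) (toR2 q)) (toR2 '' segNE p q)
      ≤ 4 * (B : ℝ) + 9 := by
  set a := p.1 + p.2 with ha
  set b := q.1 + q.2 with hb
  set k := q.2 - p.2 with hk
  set n := b - a with hn
  have hnR : (0:ℝ) < (n:ℝ) := by exact_mod_cast (by omega : (0:ℤ) < n)
  set γ : ℝ → EuclideanSpace ℝ (Fin 2) := fun θ => (1 - θ) • toR2 p + θ • toR2 q with hγ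
  have hseg : segment ℝ (toR2 p) (toR2 q) = γ '' Set.Icc (0:ℝ) 1 := segment_eq_image ℝ _ _
  have hγ0 : ∀ θ : ℝ, γ θ 0 = (1 - θ) * (p.1:ℝ) + θ * (q.1:ℝ) := by
    intro θ
    simp [hγ, toR2]
  have hγ1 : ∀ θ : ℝ, γ θ 1 = (1 - θ) * (p.2:ℝ) + θ * (q.2:ℝ) := by
    intro θ
    simp [hγ, toR2]
  -- the key pointwise estimate
  have key : ∀ s : ℤ, a ≤ s → s ≤ b →
      dist (γ (((s - a : ℤ) : ℝ) / (n:ℝ))) (toR2 (ptAt p q s)) ≤ 2 * (2 * (B:ℝ) + 4) := by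
    intro s hs1 hs2
    have hd := disc (a := a) (b := b) (k := k) (c := s) (B := B) hs1 hs2 (by omega) (by omega)
      (by omega)
    set u := ucnt a b k s with hu
    set θ := (((s - a : ℤ) : ℝ) / (n:ℝ)) with hθ
    have hpt0 : toR2 (ptAt p q s) 0 = ((s : ℝ) - (p.2:ℝ) - (u:ℝ)) := by
      rw [toR2_0, ptAt]
      push_cast
      ring
    have hpt1 : toR2 (ptAt p q s) 1 = ((p.2:ℝ) + (u:ℝ)) := by
      rw [toR2_1, ptAt]
      push_cast
      ring
    have hc1 : |γ θ 1 - toR2 (ptAt p q s) 1| ≤ (2 * (B:ℝ) + 4) := by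
      rw [hγ1, hpt1]
      have hexpr : (1 - θ) * (p.2:ℝ) + θ * (q.2:ℝ) - ((p.2:ℝ) + (u:ℝ))
          = (((s - a) * k - n * u : ℤ) : ℝ) / (n:ℝ) := by
        rw [hθ]
        push_cast
        field_simp
        ring_nf
        push_cast
        rw [hk]; push_cast; ring
      rw [hexpr, abs_div, abs_of_pos hnR]
      rw [div_le_iff₀ hnR]
      have : |(((s - a) * k - n * u : ℤ) : ℝ)| = ((|(n * u - (s - a) * k : ℤ)| : ℤ) : ℝ) := by
        rw [← Int.cast_abs]
        congr 1
        rw [abs_sub_comm]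
      rw [this]
      have hrhs : ((n * (2 * (B:ℤ) + 4) : ℤ) : ℝ) = (2 * (B:ℝ) + 4) * (n:ℝ) := by
        push_cast
        ring
      calc ((|(n * u - (s - a) * k : ℤ)| : ℤ) : ℝ) ≤ ((n * (2 * (B:ℤ) + 4) : ℤ) : ℝ) := by
            exact_mod_cast hd
        _ = (2 * (B:ℝ) + 4) * (n:ℝ) := hrhs
    have hc0 : |γ θ 0 - toR2 (ptAt p q s) 0| = |γ θ 1 - toR2 (ptAt p q s) 1| := by
      rw [hγ0, hγ1, hpt0, hpt1]
      have hθn : θ * (n:ℝ) = ((s - a : ℤ) : ℝ) := by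
        rw [hθ]
        field_simp
      have e1 : (1 - θ) * (p.1:ℝ) + θ * (q.1:ℝ) - ((s : ℝ) - (p.2:ℝ) - (u:ℝ))
          = -((1 - θ) * (p.2:ℝ) + θ * (q.2:ℝ) - ((p.2:ℝ) + (u:ℝ))) := by
        have e2 : (1 - θ) * (p.1:ℝ) + θ * (q.1:ℝ) + ((1 - θ) * (p.2:ℝ) + θ * (q.2:ℝ))
            = (s:ℝ) := by
          have : (1 - θ) * (p.1:ℝ) + θ * (q.1:ℝ) + ((1 - θ) * (p.2:ℝ) + θ * (q.2:ℝ))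
              = ((a:ℝ)) + θ * ((n:ℝ)) := by
            rw [ha, hb, hn] at *
            push_cast
            ring
          rw [this, hθn]
          push_cast
          ring
        linarith
      rw [e1, abs_neg]
    have hfin := dist_le_coord (γ θ) (toR2 (ptAt p q s))
    rw [hc0] at hfin
    linarith
  -- distances along the segment
  have hγdist : ∀ θ θ' : ℝ, dist (γ θ) (γ θ') = |θ - θ'| * dist (toR2 q) (toR2 p) := by
    intro θ θ'
    rw [dist_eq_norm, dist_eq_norm]
    have : γ θ - γ θ' = (θ - θ') • (toR2 q - toR2 p) := by
      rw [hγ]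
      simp only
      module
    rw [this, norm_smul, Real.norm_eq_abs]
  have hdistpq : dist (toR2 q) (toR2 p) ≤ (n:ℝ) := by
    calc dist (toR2 q) (toR2 p) ≤ |toR2 q 0 - toR2 p 0| + |toR2 q 1 - toR2 p 1| :=
        dist_le_coord _ _
      _ = ((q.1:ℝ) - (p.1:ℝ)) + ((q.2:ℝ) - (p.2:ℝ)) := by
          rw [toR2_0, toR2_1, toR2_0, toR2_1, abs_of_nonneg, abs_of_nonneg]
          · have := (Int.cast_le (R := ℝ)).mpr hy; push_cast; linarith
          · have := (Int.cast_le (R := ℝ)).mpr hx; push_cast; linarith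
      _ ≤ (n:ℝ) := le_of_eq (by rw [hn, hb, ha]; push_cast; ring)
  -- conclude via two-sided approximation
  apply Metric.hausdorffDist_le_of_mem_dist (by positivity)
  · -- segment points are close to the staircase
    intro x hxmem
    rw [hseg] at hxmem
    obtain ⟨θ, hθI, rfl⟩ := hxmem
    set s : ℤ := a + ⌊θ * (n:ℝ)⌋ with hs
    have hθn0 : 0 ≤ θ * (n:ℝ) := mul_nonneg hθI.1 hnR.le
    have hθn1 : θ * (n:ℝ) ≤ (n:ℝ) := by nlinarith [hθI.2]
    have hfl0 : (0:ℤ) ≤ ⌊θ * (n:ℝ)⌋ := Int.floor_nonneg.mpr hθn0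
    have hfl1 : ⌊θ * (n:ℝ)⌋ ≤ n := by
      have h' : (⌊θ * (n:ℝ)⌋ : ℝ) ≤ (n:ℝ) := le_trans (Int.floor_le _) hθn1
      exact_mod_cast h'
    refine ⟨toR2 (ptAt p q s), Set.mem_image_of_mem _ (ptAt_mem (by omega) (by omega)), ?_⟩
    have hkey := key s (by omega) (by omega)
    have htri := dist_triangle (γ θ) (γ (((s - a:ℤ):ℝ)/(n:ℝ))) (toR2 (ptAt p q s))
    have hstep : dist (γ θ) (γ (((s - a:ℤ):ℝ)/(n:ℝ))) ≤ 1 := by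
      rw [hγdist]
      have hfl : ((s - a:ℤ):ℝ) = (⌊θ * (n:ℝ)⌋ : ℝ) := by
        rw [hs]; push_cast; ring
      have h1 : |θ - ((s - a:ℤ):ℝ)/(n:ℝ)| ≤ 1 / (n:ℝ) := by
        rw [hfl, abs_le]
        have hle := Int.floor_le (θ * (n:ℝ))
        have hlt := Int.lt_floor_add_one (θ * (n:ℝ))
        constructor
        · rw [neg_le, neg_sub]
          rw [div_sub' hnR.ne', div_le_div_iff₀ hnR hnR]
          nlinarith
        · rw [sub_div' hnR.ne'] at *
          rw [div_le_div_iff₀ hnR hnR]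
          nlinarith
      calc |θ - ((s - a:ℤ):ℝ)/(n:ℝ)| * dist (toR2 q) (toR2 p)
          ≤ (1/(n:ℝ)) * (n:ℝ) :=
            mul_le_mul h1 hdistpq dist_nonneg (by positivity)
        _ = 1 := by field_simp
    calc dist (γ θ) (toR2 (ptAt p q s))
        ≤ dist (γ θ) (γ (((s - a:ℤ):ℝ)/(n:ℝ))) + dist (γ (((s - a:ℤ):ℝ)/(n:ℝ)))
          (toR2 (ptAt p q s)) := htri
      _ ≤ 1 + 2 * (2 * (B:ℝ) + 4) := by linarith
      _ = 4 * (B:ℝ) + 9 := by ring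
  · -- staircase points are close to the segment
    intro z hz
    obtain ⟨r, hr, rfl⟩ := hz
    rw [mem_segNE_iff] at hr
    obtain ⟨h1, h2, h3⟩ := hr
    refine ⟨γ (((r.1 + r.2 - a:ℤ):ℝ)/(n:ℝ)), ?_, ?_⟩
    · rw [hseg]
      refine ⟨(((r.1 + r.2 - a:ℤ):ℝ)/(n:ℝ)), ⟨?_, ?_⟩, rfl⟩
      · apply div_nonneg _ hnR.le
        exact_mod_cast (by omega : (0:ℤ) ≤ r.1 + r.2 - a)
      · rw [div_le_one hnR]
        exact_mod_cast (by omega : r.1 + r.2 - a ≤ n)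
    · have hkey := key (r.1 + r.2) (by omega) (by omega)
      rw [dist_comm]
      calc dist (γ (((r.1 + r.2 - a:ℤ):ℝ)/(n:ℝ))) (toR2 r)
          = dist (γ (((r.1 + r.2 - a:ℤ):ℝ)/(n:ℝ))) (toR2 (ptAt p q (r.1 + r.2))) := by
            rw [← h3]
        _ ≤ 2 * (2 * (B:ℝ) + 4) := hkey
        _ ≤ 4 * (B:ℝ) + 9 := by linarith

/-! ### reflection and the full system -/

def refl1 (r : ℤ × ℤ) : ℤ × ℤ := (-r.1, r.2)

@[simp] lemma refl1_invol (r : ℤ × ℤ) : refl1 (refl1 r) = r := by simp [refl1]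

lemma refl1_inj : Function.Injective refl1 := by
  intro x y h
  have := congrArg refl1 h
  simpa using this

lemma mem_refl1_image {S : Set (ℤ × ℤ)} {r : ℤ × ℤ} : r ∈ refl1 '' S ↔ refl1 r ∈ S := by
  constructor
  · rintro ⟨x, hx, rfl⟩
    simpa using hx
  · intro h
    exact ⟨refl1 r, h, by simp⟩

noncomputable def seg (p q : ℤ × ℤ) : Set (ℤ × ℤ) :=
  if p.1 ≤ q.1 ∧ p.2 ≤ q.2 then segNE p q
  else if q.1 ≤ p.1 ∧ q.2 ≤ p.2 then segNE q p
  else if p.1 ≤ q.1 then refl1 '' segNE (refl1 q) (refl1 p)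
  else refl1 '' segNE (refl1 p) (refl1 q)

lemma segNE_horiz_compat {u v : ℤ × ℤ} (hy : u.2 = v.2) (hx : u.1 ≤ v.1) :
    segNE u v = refl1 '' segNE (refl1 v) (refl1 u) := by
  rw [segNE_horiz hy hx, segNE_horiz (show (refl1 v).2 = (refl1 u).2 by simp [refl1, hy])
    (show (refl1 v).1 ≤ (refl1 u).1 by simp [refl1]; omega)]
  ext r
  rw [mem_refl1_image]
  simp only [Set.mem_setOf_eq, refl1]
  constructor
  · rintro ⟨h1, h2, h3⟩; exact ⟨by omega, by omega, by omega⟩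
  · rintro ⟨h1, h2, h3⟩; exact ⟨by omega, by omega, by omega⟩

lemma segNE_vert_compat {u v : ℤ × ℤ} (hx : u.1 = v.1) (hy : u.2 ≤ v.2) :
    segNE u v = refl1 '' segNE (refl1 u) (refl1 v) := by
  rw [segNE_vert hx hy, segNE_vert (show (refl1 u).1 = (refl1 v).1 by simp [refl1]; omega)
    (show (refl1 u).2 ≤ (refl1 v).2 by simp [refl1]; omega)]
  ext r
  rw [mem_refl1_image]
  simp only [Set.mem_setOf_eq, refl1]
  constructor
  · rintro ⟨h1, h2, h3⟩; exact ⟨by omega, by omega, by omega⟩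
  · rintro ⟨h1, h2, h3⟩; exact ⟨by omega, by omega, by omega⟩

lemma gridAdj_symm {p q : ℤ × ℤ} (h : GridAdj p q) : GridAdj q p := by
  rcases h with ⟨h1, h2⟩ | ⟨h1, h2⟩
  · exact Or.inl ⟨by rw [abs_sub_comm]; exact h1, h2.symm⟩
  · exact Or.inr ⟨h1.symm, by rw [abs_sub_comm]; exact h2⟩

lemma gridAdj_refl1 {p q : ℤ × ℤ} (h : GridAdj p q) : GridAdj (refl1 p) (refl1 q) := by
  rcases h with ⟨h1, h2⟩ | ⟨h1, h2⟩
  · refine Or.inl ⟨?_, by simp [refl1, h2]⟩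
    simp only [refl1]
    rw [show -q.1 - -p.1 = -(q.1 - p.1) by ring, abs_neg]
    exact h1
  · refine Or.inr ⟨by simp [refl1]; omega, by simp [refl1]; exact h2⟩

lemma IsGridPath.symm' {p q : ℤ × ℤ} {S : Set (ℤ × ℤ)} (h : IsGridPath p q S) :
    IsGridPath q p S := by
  obtain ⟨n, f, h0, hl, hinj, hadj, hrange⟩ := h
  refine ⟨n, f ∘ Fin.rev, ?_, ?_, hinj.comp Fin.rev_injective, ?_, ?_⟩
  · show f (Fin.rev 0) = q
    rwa [Fin.rev_zero]
  · show f (Fin.rev (Fin.last n)) = p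
    rwa [Fin.rev_last]
  · intro i
    have e1 : Fin.rev i.castSucc = (Fin.rev i).succ := Fin.rev_castSucc i
    have e2 : Fin.rev i.succ = (Fin.rev i).castSucc := Fin.rev_succ i
    show GridAdj (f (Fin.rev i.castSucc)) (f (Fin.rev i.succ))
    rw [e1, e2]
    exact gridAdj_symm (hadj (Fin.rev i))
  · rw [Set.range_comp, Fin.rev_surjective.range_eq, Set.image_univ] at *
    exact hrange

lemma IsGridPath.refl1_im {p q : ℤ × ℤ} {S : Set (ℤ × ℤ)} (h : IsGridPath p q S) :
    IsGridPath (refl1 p) (refl1 q) (refl1 '' S) := by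
  obtain ⟨n, f, h0, hl, hinj, hadj, hrange⟩ := h
  refine ⟨n, refl1 ∘ f, by simp [h0], by simp [hl], refl1_inj.comp hinj, ?_, ?_⟩
  · intro i
    exact gridAdj_refl1 (hadj i)
  · rw [Set.range_comp, hrange]

lemma prod_eq {p q : ℤ × ℤ} (h1 : p.1 = q.1) (h2 : p.2 = q.2) : p = q :=
  Prod.ext h1 h2

lemma seg_path (p q : ℤ × ℤ) : IsGridPath p q (seg p q) := by
  unfold seg
  split_ifs with h1 h2 h3
  · exact segNE_path h1.1 h1.2
  · exact (segNE_path h2.1 h2.2).symm'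
  · have hpath := (segNE_path (p := refl1 q) (q := refl1 p)
      (by simp [refl1]; omega) (by simp [refl1]; omega)).refl1_im
    rw [refl1_invol, refl1_invol] at hpath
    exact hpath.symm'
  · have hpath := (segNE_path (p := refl1 p) (q := refl1 q)
      (by simp [refl1]; omega) (by simp [refl1]; omega)).refl1_im
    rw [refl1_invol, refl1_invol] at hpath
    exact hpath

lemma seg_symm (p q : ℤ × ℤ) : seg p q = seg q p := by
  unfold seg
  split_ifs with h1 h2 h3 h4 h5 h6 h7 h8 h9 h10 <;>
    first
      | rfl
      | (exfalso; omega)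
      | (have hpq : p = q := prod_eq (by omega) (by omega); rw [hpq])

lemma seg_self (p : ℤ × ℤ) : seg p p = segNE p p := by
  unfold seg
  rw [if_pos ⟨le_rfl, le_rfl⟩]

lemma seg_subseg (p q r : ℤ × ℤ) (hr : r ∈ seg p q) : seg p r ⊆ seg p q := by
  unfold seg at hr ⊢
  by_cases h1 : p.1 ≤ q.1 ∧ p.2 ≤ q.2
  · rw [if_pos h1] at hr ⊢
    have hbet := segNE_between h1.1 h1.2 hr
    rw [if_pos (show p.1 ≤ r.1 ∧ p.2 ≤ r.2 by omega)]
    exact segNE_subseg_low h1.1 h1.2 hr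
  · rw [if_neg h1] at hr ⊢
    by_cases h2 : q.1 ≤ p.1 ∧ q.2 ≤ p.2
    · rw [if_pos h2] at hr ⊢
      have hbet := segNE_between h2.1 h2.2 hr
      by_cases h3 : p.1 ≤ r.1 ∧ p.2 ≤ r.2
      · have hrp : r = p := prod_eq (by omega) (by omega)
        rw [if_pos h3, hrp]
        exact segNE_subseg_high h2.1 h2.2 (hrp ▸ hr)
      · rw [if_neg h3, if_pos (show r.1 ≤ p.1 ∧ r.2 ≤ p.2 by omega)]
        exact segNE_subseg_high h2.1 h2.2 hr
    · rw [if_neg h2] at hr ⊢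
      by_cases h3 : p.1 ≤ q.1
      · -- SE quadrant: p.1 < q.1, q.2 < p.2
        rw [if_pos h3] at hr ⊢
        have hr' : refl1 r ∈ segNE (refl1 q) (refl1 p) := mem_refl1_image.mp hr
        have hNE1 : (refl1 q).1 ≤ (refl1 p).1 := by simp [refl1]; omega
        have hNE2 : (refl1 q).2 ≤ (refl1 p).2 := by simp [refl1]; omega
        have hbet := segNE_between hNE1 hNE2 hr'
        simp only [refl1] at hbet
        by_cases g1 : p.1 ≤ r.1 ∧ p.2 ≤ r.2
        · have hr2 : p.2 = r.2 := by omega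
          rw [if_pos g1, segNE_horiz_compat hr2 g1.1]
          exact Set.image_mono (segNE_subseg_high hNE1 hNE2 hr')
        · by_cases g2 : r.1 ≤ p.1 ∧ r.2 ≤ p.2
          · have hr1 : r.1 = p.1 := by omega
            rw [if_neg g1, if_pos g2, segNE_vert_compat (by omega) g2.2]
            exact Set.image_mono (segNE_subseg_high hNE1 hNE2 hr')
          · rw [if_neg g1, if_neg g2, if_pos (show p.1 ≤ r.1 by omega)]
            exact Set.image_mono (segNE_subseg_high hNE1 hNE2 hr')
      · -- NW quadrant: q.1 < p.1, p.2 < q.2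
        rw [if_neg h3] at hr ⊢
        have hr' : refl1 r ∈ segNE (refl1 p) (refl1 q) := mem_refl1_image.mp hr
        have hNE1 : (refl1 p).1 ≤ (refl1 q).1 := by simp [refl1]; omega
        have hNE2 : (refl1 p).2 ≤ (refl1 q).2 := by simp [refl1]; omega
        have hbet := segNE_between hNE1 hNE2 hr'
        simp only [refl1] at hbet
        by_cases g1 : p.1 ≤ r.1 ∧ p.2 ≤ r.2
        · have hr1 : p.1 = r.1 := by omega
          rw [if_pos g1, segNE_vert_compat hr1 g1.2]
          exact Set.image_mono (segNE_subseg_low hNE1 hNE2 hr')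
        · by_cases g2 : r.1 ≤ p.1 ∧ r.2 ≤ p.2
          · have hr2 : r.2 = p.2 := by omega
            rw [if_neg g1, if_pos g2, segNE_horiz_compat hr2 g2.1]
            exact Set.image_mono (segNE_subseg_low hNE1 hNE2 hr')
          · rw [if_neg g1, if_neg g2, if_neg (show ¬ p.1 ≤ r.1 by omega)]
            exact Set.image_mono (segNE_subseg_low hNE1 hNE2 hr')

lemma seg_prolong (p q : ℤ × ℤ) : ∃ r, r ∉ seg p q ∧ seg p q ⊆ seg p r := by
  unfold seg
  by_cases h1 : p.1 ≤ q.1 ∧ p.2 ≤ q.2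
  · obtain ⟨r, hne, hnotin, hsub⟩ := segNE_extend_high h1.1 h1.2
    refine ⟨r, ?_, ?_⟩
    · rw [if_pos h1]; exact hnotin
    · rw [if_pos h1, if_pos hne]; exact hsub
  · rw [if_neg h1]
    by_cases h2 : q.1 ≤ p.1 ∧ q.2 ≤ p.2
    · rw [if_pos h2]
      obtain ⟨r, hne, hnotin, hsub⟩ := segNE_extend_low h2.1 h2.2
      refine ⟨r, hnotin, ?_⟩
      rw [if_neg (show ¬ (p.1 ≤ r.1 ∧ p.2 ≤ r.2) by omega),
        if_pos (show r.1 ≤ p.1 ∧ r.2 ≤ p.2 by omega)]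
      exact hsub
    · rw [if_neg h2]
      by_cases h3 : p.1 ≤ q.1
      · -- SE quadrant: p.1 < q.1, q.2 < p.2
        rw [if_pos h3]
        obtain ⟨r', hne, hnotin, hsub⟩ := segNE_extend_low
          (p := refl1 q) (q := refl1 p) (by simp [refl1]; omega) (by simp [refl1]; omega)
        simp only [refl1] at hne
        refine ⟨refl1 r', ?_, ?_⟩
        · intro hmem
          rw [mem_refl1_image, refl1_invol] at hmem
          exact hnotin hmem
        · have hc1 : ¬ ((p.1 : ℤ) ≤ (refl1 r').1 ∧ p.2 ≤ (refl1 r').2) := by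
            simp only [refl1]; omega
          have hc2 : ¬ ((refl1 r').1 ≤ p.1 ∧ (refl1 r').2 ≤ p.2) := by
            simp only [refl1]; omega
          have hc3 : p.1 ≤ (refl1 r').1 := by simp only [refl1]; omega
          rw [if_neg hc1, if_neg hc2, if_pos hc3, refl1_invol]
          exact Set.image_mono hsub
      · -- NW quadrant: q.1 < p.1, p.2 < q.2
        rw [if_neg h3]
        obtain ⟨r', hne, hnotin, hsub⟩ := segNE_extend_high
          (p := refl1 p) (q := refl1 q) (by simp [refl1]; omega) (by simp [refl1]; omega)
        simp only [refl1] at hne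
        have hq'mem : refl1 q ∈ segNE (refl1 p) r' :=
          hsub (segNE_other_mem _ _ (by simp [refl1]; omega) (by simp [refl1]; omega))
        have hbet := segNE_between (p := refl1 p) (q := r') (by simp [refl1]; omega) (by simp [refl1]; omega) hq'mem
        simp only [refl1] at hbet
        refine ⟨refl1 r', ?_, ?_⟩
        · intro hmem
          rw [mem_refl1_image, refl1_invol] at hmem
          exact hnotin hmem
        · by_cases g1 : p.1 ≤ (refl1 r').1 ∧ p.2 ≤ (refl1 r').2
          · -- vertical edge case: (refl1 r').1 = p.1
            have hre : p.1 = (refl1 r').1 := by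
              simp only [refl1] at g1 ⊢
              omega
            rw [if_pos g1, segNE_vert_compat hre g1.2, refl1_invol]
            exact Set.image_mono hsub
          · have hc2 : ¬ ((refl1 r').1 ≤ p.1 ∧ (refl1 r').2 ≤ p.2) := by
              simp only [refl1]; omega
            have hc3 : ¬ (p.1 ≤ (refl1 r').1) := by
              simp only [refl1] at g1 ⊢
              omega
            rw [if_neg g1, if_neg hc2, if_neg hc3, refl1_invol]
            exact Set.image_mono hsub

lemma seg_monoV (p q : ℤ × ℤ) (h : p.1 = q.1) : ∀ r ∈ seg p q, r.1 = p.1 := by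
  intro r hr
  unfold seg at hr
  split_ifs at hr with h1 h2 h3
  · rw [segNE_vert h h1.2] at hr
    exact hr.1
  · rw [segNE_vert (show q.1 = p.1 by omega) h2.2] at hr
    have := hr.1
    omega
  · exfalso; omega
  · exfalso; omega

lemma seg_monoH (p q : ℤ × ℤ) (h : p.2 = q.2) : ∀ r ∈ seg p q, r.2 = p.2 := by
  intro r hr
  unfold seg at hr
  split_ifs at hr with h1 h2 h3
  · rw [segNE_horiz h h1.1] at hr
    exact hr.1
  · rw [segNE_horiz (show q.2 = p.2 by omega) h2.1] at hr
    have := hr.1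
    omega
  · exfalso; omega
  · exfalso; omega

theorem seg_isCDS : IsCDS seg :=
  ⟨seg_path, seg_symm, seg_subseg, seg_prolong, seg_monoV, seg_monoH⟩

open Real Metric

/-! ### reflection isometry of the plane -/

noncomputable def Rrefl : EuclideanSpace ℝ (Fin 2) → EuclideanSpace ℝ (Fin 2) :=
  fun x => WithLp.toLp 2 ![-(x 0), x 1]

lemma Rrefl_isom : Isometry Rrefl := by
  apply Isometry.of_dist_eq
  intro x y
  rw [EuclideanSpace.dist_eq, EuclideanSpace.dist_eq, Fin.sum_univ_two, Fin.sum_univ_two,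
    Real.dist_eq, Real.dist_eq, Real.dist_eq, Real.dist_eq]
  have e0 : Rrefl x 0 - Rrefl y 0 = -(x 0 - y 0) := by
    show -(x 0) - -(y 0) = _
    ring
  have e1 : Rrefl x 1 - Rrefl y 1 = x 1 - y 1 := rfl
  rw [e0, e1, abs_neg]

lemma Rrefl_toR2 (r : ℤ × ℤ) : Rrefl (toR2 r) = toR2 (refl1 r) := by
  ext i
  fin_cases i <;> simp [Rrefl, toR2, refl1]

lemma Rrefl_affine (c : ℝ) (x y : EuclideanSpace ℝ (Fin 2)) :
    Rrefl ((1 - c) • x + c • y) = (1 - c) • Rrefl x + c • Rrefl y := by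
  ext i
  fin_cases i <;> simp [Rrefl] <;> ring

lemma Rrefl_segment (x y : EuclideanSpace ℝ (Fin 2)) :
    Rrefl '' segment ℝ x y = segment ℝ (Rrefl x) (Rrefl y) := by
  rw [segment_eq_image, segment_eq_image, Set.image_image]
  apply Set.image_congr
  intro c _
  exact Rrefl_affine c x y

/-! ### logarithmic bound for NE pairs -/

lemma segNE_hd {p q : ℤ × ℤ} (hx : p.1 ≤ q.1) (hy : p.2 ≤ q.2) :
    Metric.hausdorffDist (segment ℝ (toR2 p) (toR2 q)) (toR2 '' segNE p q)
      ≤ 30 * Real.log (dist (toR2 p) (toR2 q) + 2) := by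
  by_cases hpq : q.1 + q.2 - (p.1 + p.2) = 0
  · have hq : p = q := prod_eq (by omega) (by omega)
    subst hq
    rw [segment_same]
    have hseg : segNE p p = {p} := by
      rw [segNE_horiz rfl le_rfl]
      ext r
      simp only [Set.mem_setOf_eq, Set.mem_singleton_iff]
      constructor
      · rintro ⟨a1, a2, a3⟩; exact prod_eq (by omega) a1
      · rintro rfl; exact ⟨rfl, le_rfl, le_rfl⟩
    rw [hseg, Set.image_singleton, Metric.hausdorffDist_self_zero, dist_self]
    have hl : (0:ℝ) ≤ Real.log (0 + 2) := Real.log_nonneg (by norm_num)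
    linarith
  · set n := q.1 + q.2 - (p.1 + p.2) with hn
    have hn1 : 1 ≤ n := by omega
    set nn := n.toNat with hnn
    set B := Nat.log 2 nn + 1 with hB
    have hBle : n ≤ 2 ^ B := by
      have h1 := Nat.lt_pow_succ_log_self (by norm_num : 1 < 2) nn
      have h2 : (nn : ℤ) < ((2 ^ B : ℕ) : ℤ) := by exact_mod_cast h1
      have h3 : ((2 ^ B : ℕ) : ℤ) = 2 ^ B := by push_cast; ring
      omega
    have hmain := segNE_hausdorff hx hy hn1 hBle
    set d := dist (toR2 p) (toR2 q) with hd
    set L := Real.log (d + 2) with hL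
    have hc := coord_le_dist (toR2 p) (toR2 q)
    have hco0 : ((q.1 : ℝ) - (p.1 : ℝ)) ≤ d := by
      have h := hc.1
      rw [toR2_0, toR2_0] at h
      have habs : |(p.1:ℝ) - q.1| = (q.1:ℝ) - p.1 := by
        rw [abs_sub_comm]
        apply abs_of_nonneg
        have : (p.1:ℝ) ≤ q.1 := by exact_mod_cast hx
        linarith
      rw [habs] at h
      exact h
    have hco1 : ((q.2 : ℝ) - (p.2 : ℝ)) ≤ d := by
      have h := hc.2
      rw [toR2_1, toR2_1] at h
      have habs : |(p.2:ℝ) - q.2| = (q.2:ℝ) - p.2 := by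
        rw [abs_sub_comm]
        apply abs_of_nonneg
        have : (p.2:ℝ) ≤ q.2 := by exact_mod_cast hy
        linarith
      rw [habs] at h
      exact h
    have f1 : (n:ℝ) ≤ 2 * d := by
      have : (n:ℝ) = ((q.1:ℝ) - p.1) + ((q.2:ℝ) - p.2) := by
        rw [hn]; push_cast; ring
      linarith
    have f2 : 1 ≤ d := by
      rcases (by omega : 1 ≤ q.1 - p.1 ∨ 1 ≤ q.2 - p.2) with h | h
      · have : (1:ℝ) ≤ (q.1:ℝ) - p.1 := by exact_mod_cast h
        linarith
      · have : (1:ℝ) ≤ (q.2:ℝ) - p.2 := by exact_mod_cast h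
        linarith
    have hd2pos : (0:ℝ) < d + 2 := by linarith
    have f3 : 1 < L := by
      rw [hL, Real.lt_log_iff_exp_lt hd2pos]
      have := Real.exp_one_lt_d9
      linarith
    have l2a : (0.6931471803 : ℝ) < Real.log 2 := Real.log_two_gt_d9
    have l2b : Real.log 2 < 0.6931471808 := Real.log_two_lt_d9
    have f5 : (B:ℝ) * Real.log 2 ≤ 2 * Real.log 2 + L := by
      have hnn0 : nn ≠ 0 := by omega
      have hpow : ((2 ^ Nat.log 2 nn : ℕ) : ℝ) ≤ (n : ℝ) := by
        have := Nat.pow_log_le_self 2 hnn0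
        have h4 : ((2 ^ Nat.log 2 nn : ℕ) : ℤ) ≤ (nn : ℤ) := by exact_mod_cast this
        have h5 : ((nn : ℕ) : ℤ) = n := by omega
        exact_mod_cast (h4.trans_eq h5)
      have hnpos : (0:ℝ) < (n:ℝ) := by exact_mod_cast (by omega : (0:ℤ) < n)
      have hlogn : (Nat.log 2 nn : ℝ) * Real.log 2 ≤ Real.log (n:ℝ) := by
        have h6 : Real.log ((2:ℝ) ^ Nat.log 2 nn) ≤ Real.log (n:ℝ) := by
          apply Real.log_le_log (by positivity)
          exact_mod_cast hpow
        rwa [Real.log_pow] at h6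
      have hn2d : Real.log (n:ℝ) ≤ Real.log 2 + L := by
        have h7 : Real.log (n:ℝ) ≤ Real.log (2 * (d + 2)) := by
          apply Real.log_le_log hnpos
          linarith
        rwa [Real.log_mul (by norm_num) (by linarith)] at h7
      have hBcast : (B:ℝ) = (Nat.log 2 nn : ℝ) + 1 := by
        rw [hB]; push_cast; ring
      rw [hBcast]
      have hcomb := hlogn.trans hn2d
      nlinarith [hcomb]
    have h1 : (4*(B:ℝ) + 9) * Real.log 2 ≤ 17 * Real.log 2 + 4 * L := by nlinarith [f5]
    have hL0 : (0:ℝ) < L := by linarith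
    have hprod : 0.6931471803 * L < Real.log 2 * L := by
      exact mul_lt_mul_of_pos_right l2a hL0
    have h2 : 17 * Real.log 2 + 4 * L ≤ 30 * L * Real.log 2 := by nlinarith [f3, l2b, hprod]
    have h3 : (4*(B:ℝ) + 9) ≤ 30 * L :=
      le_of_mul_le_mul_right (by nlinarith [h1, h2]) (by linarith : (0:ℝ) < Real.log 2)
    linarith

/-! ### the main theorem (Hausdorff part) -/

lemma seg_hd (p q : ℤ × ℤ) :
    Metric.hausdorffDist (segment ℝ (toR2 p) (toR2 q)) (toR2 '' seg p q)
      ≤ 30 * Real.log (dist (toR2 p) (toR2 q) + 2) := by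
  unfold seg
  by_cases h1 : p.1 ≤ q.1 ∧ p.2 ≤ q.2
  · rw [if_pos h1]
    exact segNE_hd h1.1 h1.2
  · rw [if_neg h1]
    by_cases h2 : q.1 ≤ p.1 ∧ q.2 ≤ p.2
    · rw [if_pos h2, segment_symm, dist_comm]
      exact segNE_hd h2.1 h2.2
    · rw [if_neg h2]
      have himg : ∀ u v : ℤ × ℤ, toR2 '' (refl1 '' segNE u v) = Rrefl '' (toR2 '' segNE u v) := by
        intro u v
        rw [Set.image_image, Set.image_image]
        apply Set.image_congr
        intro r _
        rw [Rrefl_toR2]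
      by_cases h3 : p.1 ≤ q.1
      · rw [if_pos h3, himg]
        have hsegm : segment ℝ (toR2 p) (toR2 q)
            = Rrefl '' segment ℝ (toR2 (refl1 q)) (toR2 (refl1 p)) := by
          rw [Rrefl_segment, Rrefl_toR2, Rrefl_toR2, refl1_invol, refl1_invol, segment_symm]
        rw [hsegm, Metric.hausdorffDist_image Rrefl_isom]
        have hdist : dist (toR2 (refl1 q)) (toR2 (refl1 p)) = dist (toR2 p) (toR2 q) := by
          rw [← Rrefl_toR2, ← Rrefl_toR2, Rrefl_isom.dist_eq, dist_comm]
        rw [← hdist]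
        exact segNE_hd (by simp [refl1]; omega) (by simp [refl1]; omega)
      · rw [if_neg h3, himg]
        have hsegm : segment ℝ (toR2 p) (toR2 q)
            = Rrefl '' segment ℝ (toR2 (refl1 p)) (toR2 (refl1 q)) := by
          rw [Rrefl_segment, Rrefl_toR2, Rrefl_toR2, refl1_invol, refl1_invol]
        rw [hsegm, Metric.hausdorffDist_image Rrefl_isom]
        have hdist : dist (toR2 (refl1 p)) (toR2 (refl1 q)) = dist (toR2 p) (toR2 q) := by
          rw [← Rrefl_toR2, ← Rrefl_toR2, Rrefl_isom.dist_eq]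
        rw [← hdist]
        exact segNE_hd (by simp [refl1]; omega) (by simp [refl1]; omega)

theorem exists_CDS_small_hausdorff :
    ∃ (S : ℤ × ℤ → ℤ × ℤ → Set (ℤ × ℤ)) (c : ℝ), 0 < c ∧ IsCDS S ∧
      ∀ p q : ℤ × ℤ,
        Metric.hausdorffDist (segment ℝ (toR2 p) (toR2 q)) (toR2 '' S p q) ≤
          c * Real.log (dist (toR2 p) (toR2 q) + 2) :=
  ⟨seg, 30, by norm_num, seg_isCDS, seg_hd⟩
end

section
/- Let d ≥ 1 and k ≥ 1, and let α = a_1 a_2 … a_k and β = b_1 b_2 … b_k be words over the alphabet {1,2,…,d} such that every letter occurs the same number of times in α and in β (i.e., for each l ∈ {1,…,d}, |{i : a_i = l}| = |{i : b_i = l}|), and suppose a_1 > b_1. Then there exists an index 1 < i ≤ k with a_i < a_1 and b_i > b_1. -/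
theorem word_letter_exchange (d k : ℕ) (hd : 1 ≤ d) (hk : 0 < k)
    (a b : Fin k → Fin d)
    (hcount : ∀ l : Fin d,
      (Finset.univ.filter fun i => a i = l).card =
        (Finset.univ.filter fun i => b i = l).card)
    (h1 : b ⟨0, hk⟩ < a ⟨0, hk⟩) :
    ∃ i : Fin k, i ≠ ⟨0, hk⟩ ∧ a i < a ⟨0, hk⟩ ∧ b ⟨0, hk⟩ < b i := by

  by_contra hcon
  push_neg at hcon
  have key : ∀ c : Fin d,
      (Finset.univ.filter fun i => a i < c).card =
        (Finset.univ.filter fun i => b i < c).card := by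
    intro c
    have fib : ∀ (f : Fin k → Fin d),
        (Finset.univ.filter fun i => f i < c).card
        = ∑ l ∈ Finset.univ.filter (fun l : Fin d => l < c),
            (Finset.univ.filter fun i => f i = l).card := by
      intro f
      rw [Finset.card_eq_sum_card_fiberwise
        (f := f) (t := Finset.univ.filter (fun l : Fin d => l < c))
        (by intro x hx; simp only [Finset.mem_coe, Finset.mem_filter, Finset.mem_univ, true_and] at hx ⊢
            exact hx)]
      apply Finset.sum_congr rfl
      intro l hl
      simp only [Finset.mem_filter, Finset.mem_univ, true_and] at hl
      congr 1
      ext i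
      simp only [Finset.mem_filter, Finset.mem_univ, true_and]
      constructor
      · rintro ⟨-, h⟩; exact h
      · intro h; exact ⟨h ▸ hl, h⟩
    rw [fib a, fib b]
    exact Finset.sum_congr rfl (fun l _ => hcount l)
  set z : Fin k := ⟨0, hk⟩
  have hAB : (Finset.univ.filter fun i => a i < a z)
      ⊂ (Finset.univ.filter fun i => b i ≤ b z) := by
    constructor
    · intro i hi
      simp only [Finset.mem_filter, Finset.mem_univ, true_and] at hi ⊢
      have hne : i ≠ z := by
        intro h; rw [h] at hi; exact lt_irrefl _ hi
      exact hcon i hne hi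
    · intro hsub
      have := hsub (by simp : z ∈ Finset.univ.filter fun i => b i ≤ b z)
      simp only [Finset.mem_filter, Finset.mem_univ, true_and] at this
      exact lt_irrefl _ this
  have hBsub : (Finset.univ.filter fun i => b i ≤ b z)
      ⊆ (Finset.univ.filter fun i => b i < a z) := by
    intro i hi
    simp only [Finset.mem_filter, Finset.mem_univ, true_and] at hi ⊢
    exact lt_of_le_of_lt hi h1
  have := Finset.card_lt_card hAB
  have h2 := Finset.card_le_card hBsub
  rw [key (a z)] at this
  omega
end

section
/- Fix d ≥ 2 and a strict total order ≺ on ℤ, and let S_≺ be the d-dimensional construction defined on pairs p,q ∈ ℤ^d with p_i ≤ q_i for all i. Then this construction satisfies: (S1) S_≺(p,q) is the vertex set of a path from p to q in the grid graph on ℤ^d; (S3) for every r ∈ S_≺(p,q) (note that automatically p_i ≤ r_i ≤ q_i for all i), S_≺(p,r) ⊆ S_≺(p,q); (S4) there exists r ∈ ℤ^d with r_i ≥ q_i for all i, r ∉ S_≺(p,q), and S_≺(p,q) ⊆ S_≺(p,r); and (S5) if p_i = q_i for some coordinate i, then every point of S_≺(p,q) has i-th coordinate equal to p_i. -/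
/- The rank "from the top" (w.r.t. `prec`) of `s` within the interval `[A, B-1]`:
the number of elements of the interval that are greater than or equal to `s`. -/
open Classical in
noncomputable def rankFromTop (prec : ℤ → ℤ → Prop) (A B s : ℤ) : ℤ :=
  (((Finset.Ico A B).filter (fun u => u = s ∨ prec s u)).card : ℤ)

/- In the `d`-dimensional construction, at a point of coordinate sum `s`, the path
moves in direction `j`: the directions are ordered `d-1, d-2, …, 0` (checked from the
top index down), and the levels of the segment interval of the `q_j - p_j` next-greatest
ranks (after those reserved for higher directions) are the ones where we step in
direction `j`. -/
open Classical in
noncomputable def dirAt {d : ℕ} (prec : ℤ → ℤ → Prop) (p q : Fin d → ℤ) (s : ℤ)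
    (j : Fin d) : Prop :=
  (∑ l ∈ Finset.univ.filter (fun l => j < l), (q l - p l)) <
      rankFromTop prec (∑ i, p i) (∑ i, q i) s ∧
    rankFromTop prec (∑ i, p i) (∑ i, q i) s ≤
      (∑ l ∈ Finset.univ.filter (fun l => j ≤ l), (q l - p l))

/- The `d`-dimensional digital segment derived from `prec`, defined for `p` and `q`
with `p i ≤ q i` for all `i`. -/
open Classical in
noncomputable def digSegD {d : ℕ} (prec : ℤ → ℤ → Prop) (p q : Fin d → ℤ) :
    Set (Fin d → ℤ) :=
  { r | (∑ i, p i) ≤ (∑ i, r i) ∧ (∑ i, r i) ≤ (∑ i, q i) ∧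
    ∀ j : Fin d, r j = p j +
      (((Finset.Ico (∑ i, p i) (∑ i, r i)).filter (fun s => dirAt prec p q s j)).card : ℤ) }

/- Adjacency in the grid graph on `ℤ^d`. -/
def GridAdjD {d : ℕ} (p q : Fin d → ℤ) : Prop :=
  ∃ j : Fin d, |q j - p j| = 1 ∧ ∀ l : Fin d, l ≠ j → q l = p l

/- `S` is the vertex set of a path from `p` to `q` in the grid graph on `ℤ^d`. -/
def IsGridPathD {d : ℕ} (p q : Fin d → ℤ) (S : Set (Fin d → ℤ)) : Prop :=
  ∃ n : ℕ, ∃ f : Fin (n + 1) → (Fin d → ℤ), f 0 = p ∧ f (Fin.last n) = q ∧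
    Function.Injective f ∧ (∀ i : Fin n, GridAdjD (f i.castSucc) (f i.succ)) ∧
    Set.range f = S

set_option linter.unusedSectionVars false
set_option maxHeartbeats 1000000
namespace DigSegProof
variable (prec : ℤ → ℤ → Prop) [IsStrictTotalOrder ℤ prec]

lemma prec_trans {a b c : ℤ} (h1 : prec a b) (h2 : prec b c) : prec a c :=
  IsTrans.trans a b c h1 h2

lemma prec_irrefl (a : ℤ) : ¬ prec a a := Std.Irrefl.irrefl a

lemma prec_tri (a b : ℤ) : prec a b ∨ a = b ∨ prec b a := trichotomous (r := prec) a b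

lemma prec_asymm {a b : ℤ} (h : prec a b) : ¬ prec b a :=
  fun h' => prec_irrefl prec a (prec_trans prec h h')

open Classical in
lemma rank_one_le {A B s : ℤ} (hs : s ∈ Finset.Ico A B) : 1 ≤ rankFromTop prec A B s := by
  unfold rankFromTop
  have hmem : s ∈ (Finset.Ico A B).filter (fun u => u = s ∨ prec s u) :=
    Finset.mem_filter.mpr ⟨hs, Or.inl rfl⟩
  have h1 : 0 < ((Finset.Ico A B).filter (fun u => u = s ∨ prec s u)).card :=
    Finset.card_pos.mpr ⟨s, hmem⟩
  exact_mod_cast h1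

open Classical in
lemma rank_nonneg (A B s : ℤ) : 0 ≤ rankFromTop prec A B s := by
  unfold rankFromTop; positivity

open Classical in
lemma rank_le {A B : ℤ} (hAB : A ≤ B) (s : ℤ) : rankFromTop prec A B s ≤ B - A := by
  unfold rankFromTop
  have h1 := Finset.card_filter_le (Finset.Ico A B) (fun u => u = s ∨ prec s u)
  have h2 : (Finset.Ico A B).card = (B - A).toNat := Int.card_Ico A B
  have h3 : ((B - A).toNat : ℤ) = B - A := Int.toNat_of_nonneg (by omega)
  omega

open Classical in
lemma rank_lt_of_prec {A B s s' : ℤ} (hs : s ∈ Finset.Ico A B) (h : prec s s') :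
    rankFromTop prec A B s' < rankFromTop prec A B s := by
  unfold rankFromTop
  have hsub : (Finset.Ico A B).filter (fun u => u = s' ∨ prec s' u) ⊆
      (Finset.Ico A B).filter (fun u => u = s ∨ prec s u) := by
    intro u hu
    obtain ⟨h1, h2⟩ := Finset.mem_filter.mp hu
    refine Finset.mem_filter.mpr ⟨h1, Or.inr ?_⟩
    rcases h2 with rfl | h2
    · exact h
    · exact prec_trans prec h h2
  have hsmem : s ∈ (Finset.Ico A B).filter (fun u => u = s ∨ prec s u) :=
    Finset.mem_filter.mpr ⟨hs, Or.inl rfl⟩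
  have hsnot : s ∉ (Finset.Ico A B).filter (fun u => u = s' ∨ prec s' u) := by
    intro hmem
    rcases (Finset.mem_filter.mp hmem).2 with rfl | h2
    · exact prec_irrefl prec s h
    · exact prec_asymm prec h h2
  have := Finset.card_lt_card ((Finset.ssubset_iff_of_subset hsub).mpr ⟨s, hsmem, hsnot⟩)
  exact_mod_cast this

lemma rank_le_rank_iff {A B s u : ℤ} (hs : s ∈ Finset.Ico A B) (hu : u ∈ Finset.Ico A B) :
    rankFromTop prec A B u ≤ rankFromTop prec A B s ↔ (u = s ∨ prec s u) := by
  constructor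
  · intro h
    rcases prec_tri prec s u with h1 | h1 | h1
    · exact Or.inr h1
    · exact Or.inl h1.symm
    · have := rank_lt_of_prec prec hu h1; omega
  · rintro (rfl | h1)
    · exact le_refl _
    · exact (rank_lt_of_prec prec hs h1).le

lemma rank_injOn {A B s u : ℤ} (hs : s ∈ Finset.Ico A B) (hu : u ∈ Finset.Ico A B)
    (h : rankFromTop prec A B u = rankFromTop prec A B s) : u = s := by
  have h1 := (rank_le_rank_iff prec hs hu).mp h.le
  have h2 := (rank_le_rank_iff prec hu hs).mp h.ge
  rcases h1 with rfl | h1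
  · rfl
  · rcases h2 with rfl | h2
    · rfl
    · exact absurd h1 (prec_asymm prec h2)

open Classical in
lemma rank_image {A B : ℤ} (hAB : A ≤ B) :
    (Finset.Ico A B).image (rankFromTop prec A B) = Finset.Icc 1 (B - A) := by
  apply Finset.eq_of_subset_of_card_le
  · intro x hx
    obtain ⟨s, hs, rfl⟩ := Finset.mem_image.mp hx
    exact Finset.mem_Icc.mpr ⟨rank_one_le prec hs, rank_le prec hAB s⟩
  · rw [Finset.card_image_of_injOn (fun u hu v hv h => rank_injOn prec hv (by exact_mod_cast hu) h)]
    rw [Int.card_Icc, Int.card_Ico]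
    omega

open Classical in
lemma rank_band_card {A B a b : ℤ} (ha : 0 ≤ a) (hab : a ≤ b) (hb : b ≤ B - A) :
    (((Finset.Ico A B).filter
      (fun s => a < rankFromTop prec A B s ∧ rankFromTop prec A B s ≤ b)).card : ℤ) = b - a := by
  have hAB : A ≤ B := by omega
  have hinj : Set.InjOn (rankFromTop prec A B) ↑(Finset.Ico A B) :=
    fun u hu v hv h => rank_injOn prec (by exact_mod_cast hv) (by exact_mod_cast hu) h
  have key : ((Finset.Ico A B).filter
        (fun s => a < rankFromTop prec A B s ∧ rankFromTop prec A B s ≤ b)).card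
      = (((Finset.Ico A B).image (rankFromTop prec A B)).filter (fun x => a < x ∧ x ≤ b)).card := by
    rw [Finset.filter_image]
    rw [Finset.card_image_of_injOn (hinj.mono (Finset.coe_subset.mpr (Finset.filter_subset _ _)))]
  rw [key, rank_image prec hAB]
  have heq : (Finset.Icc 1 (B - A)).filter (fun x => a < x ∧ x ≤ b) = Finset.Icc (a + 1) b := by
    ext x
    simp only [Finset.mem_filter, Finset.mem_Icc]
    omega
  rw [heq, Int.card_Icc]
  omega

section Dim
variable {d : ℕ} (prec : ℤ → ℤ → Prop) [IsStrictTotalOrder ℤ prec]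

/-- Tail sums of `q - p`. -/
noncomputable def gSum (p q : Fin d → ℤ) (m : ℕ) : ℤ :=
  ∑ l ∈ Finset.univ.filter (fun l : Fin d => m ≤ (l : ℕ)), (q l - p l)

lemma gSum_zero (p q : Fin d → ℤ) : gSum p q 0 = (∑ i, q i) - (∑ i, p i) := by
  unfold gSum
  rw [Finset.filter_true_of_mem (fun _ _ => Nat.zero_le _), Finset.sum_sub_distrib]

lemma gSum_top (p q : Fin d → ℤ) : gSum p q d = 0 := by
  unfold gSum
  rw [Finset.filter_false_of_mem, Finset.sum_empty]
  intro l _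
  simp only [not_le]
  exact l.isLt

lemma gSum_nonneg (p q : Fin d → ℤ) (hpq : ∀ i, p i ≤ q i) (m : ℕ) : 0 ≤ gSum p q m :=
  Finset.sum_nonneg fun l _ => by have := hpq l; omega

lemma gSum_anti (p q : Fin d → ℤ) (hpq : ∀ i, p i ≤ q i) {m m' : ℕ} (h : m ≤ m') :
    gSum p q m' ≤ gSum p q m := by
  apply Finset.sum_le_sum_of_subset_of_nonneg
  · intro l hl
    simp only [Finset.mem_filter, Finset.mem_univ, true_and] at hl ⊢
    omega
  · intro l _ _
    have := hpq l; omega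

lemma gSum_succ (p q : Fin d → ℤ) (j : Fin d) :
    gSum p q (j : ℕ) = gSum p q ((j : ℕ) + 1) + (q j - p j) := by
  unfold gSum
  have hins : Finset.univ.filter (fun l : Fin d => (j : ℕ) ≤ (l : ℕ)) =
      insert j (Finset.univ.filter (fun l : Fin d => (j : ℕ) + 1 ≤ (l : ℕ))) := by
    ext l
    simp only [Finset.mem_filter, Finset.mem_univ, true_and, Finset.mem_insert, Fin.ext_iff]
    omega
  rw [hins, Finset.sum_insert (by simp)]
  ring

open Classical in
lemma dirAt_iff (p q : Fin d → ℤ) (s : ℤ) (j : Fin d) :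
    dirAt prec p q s j ↔
      (gSum p q ((j : ℕ) + 1) < rankFromTop prec (∑ i, p i) (∑ i, q i) s ∧
       rankFromTop prec (∑ i, p i) (∑ i, q i) s ≤ gSum p q (j : ℕ)) := by
  unfold dirAt gSum
  have h1 : Finset.univ.filter (fun l : Fin d => j < l) =
      Finset.univ.filter (fun l : Fin d => (j : ℕ) + 1 ≤ (l : ℕ)) := by
    ext l
    simp only [Finset.mem_filter, Finset.mem_univ, true_and, Fin.lt_def]
    omega
  have h2 : Finset.univ.filter (fun l : Fin d => j ≤ l) =
      Finset.univ.filter (fun l : Fin d => (j : ℕ) ≤ (l : ℕ)) := by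
    ext l
    simp only [Finset.mem_filter, Finset.mem_univ, true_and, Fin.le_def]
  rw [h1, h2]

lemma band_exists (hd : 0 < d) (p q : Fin d → ℤ) {v : ℤ}
    (hv1 : 1 ≤ v) (hv2 : v ≤ gSum p q 0) :
    ∃ j : Fin d, gSum p q ((j : ℕ) + 1) < v ∧ v ≤ gSum p q (j : ℕ) := by
  classical
  have hP : ∃ m, gSum p q m < v := ⟨d, by rw [gSum_top]; omega⟩
  set m0 := Nat.find hP with hm0def
  have hm0 : gSum p q m0 < v := Nat.find_spec hP
  have hne : m0 ≠ 0 := by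
    intro h
    rw [h] at hm0
    omega
  have hle : m0 ≤ d := Nat.find_le (by rw [gSum_top]; omega)
  have hm1 : ¬ gSum p q (m0 - 1) < v := Nat.find_min hP (by omega)
  refine ⟨⟨m0 - 1, by omega⟩, ?_, ?_⟩
  · show gSum p q ((m0 - 1) + 1) < v
    have h' : (m0 - 1) + 1 = m0 := by omega
    rw [h']
    exact hm0
  · exact not_lt.mp hm1

open Classical in
lemma dirAt_existsUnique (hd : 0 < d) (p q : Fin d → ℤ) (hpq : ∀ i, p i ≤ q i) {s : ℤ}
    (hs : s ∈ Finset.Ico (∑ i, p i) (∑ i, q i)) : ∃! j : Fin d, dirAt prec p q s j := by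
  have hAB : (∑ i, p i) ≤ (∑ i, q i) := by
    have := Finset.mem_Ico.mp hs; omega
  have h1 := rank_one_le prec hs
  have h2 := rank_le prec hAB s
  obtain ⟨j, hj1, hj2⟩ := band_exists hd p q (v := rankFromTop prec (∑ i, p i) (∑ i, q i) s)
    h1 (by rw [gSum_zero]; omega)
  refine ⟨j, (dirAt_iff prec p q s j).mpr ⟨hj1, hj2⟩, ?_⟩
  intro j' hj'
  rw [dirAt_iff] at hj'
  by_contra hne
  rcases Nat.lt_trichotomy (j' : ℕ) (j : ℕ) with h | h | h
  · have := gSum_anti p q hpq (show (j' : ℕ) + 1 ≤ (j : ℕ) by omega)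
    omega
  · exact hne (Fin.ext h)
  · have := gSum_anti p q hpq (show (j : ℕ) + 1 ≤ (j' : ℕ) by omega)
    omega

open Classical in
lemma dirAt_card (p q : Fin d → ℤ) (hpq : ∀ i, p i ≤ q i) (j : Fin d) :
    ((((Finset.Ico (∑ i, p i) (∑ i, q i)).filter
        (fun s => dirAt prec p q s j)).card : ℤ)) = q j - p j := by
  have hcongr : (Finset.Ico (∑ i, p i) (∑ i, q i)).filter (fun s => dirAt prec p q s j)
      = (Finset.Ico (∑ i, p i) (∑ i, q i)).filter
        (fun s => gSum p q ((j : ℕ) + 1) < rankFromTop prec (∑ i, p i) (∑ i, q i) s ∧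
          rankFromTop prec (∑ i, p i) (∑ i, q i) s ≤ gSum p q (j : ℕ)) :=
    Finset.filter_congr (fun s _ => by rw [dirAt_iff])
  rw [hcongr, rank_band_card prec (gSum_nonneg p q hpq _)
    (by have := gSum_succ p q j; have := hpq j; omega)
    (by have h1 := gSum_anti p q hpq (Nat.zero_le (j : ℕ)); have h2 := gSum_zero p q; omega)]
  have := gSum_succ p q j
  omega

open Classical in
lemma sum_card_filter_unique {α β : Type*} [Fintype β] (s : Finset α) (P : α → β → Prop)
    (t : Finset β) (Q : α → Prop) (h : ∀ x ∈ s, ∃! b, P x b)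
    (hQ : ∀ x ∈ s, ((∃ b ∈ t, P x b) ↔ Q x)) :
    ∑ b ∈ t, (s.filter (fun x => P x b)).card = (s.filter Q).card := by
  have hc : ∀ b ∈ t, (s.filter (fun x => P x b)).card = ∑ x ∈ s, if P x b then 1 else 0 :=
    fun b _ => Finset.card_filter _ _
  rw [Finset.sum_congr rfl hc, Finset.sum_comm, Finset.card_filter]
  refine Finset.sum_congr rfl (fun x hx => ?_)
  obtain ⟨b0, hb0, hu⟩ := h x hx
  by_cases hb : b0 ∈ t
  · rw [if_pos ((hQ x hx).mp ⟨b0, hb, hb0⟩)]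
    rw [Finset.sum_eq_single_of_mem b0 hb (fun b _ hne => if_neg (fun hP => hne (hu b hP))),
      if_pos hb0]
  · have hno : ¬ Q x := fun hQx => by
      obtain ⟨b, hbt, hbP⟩ := (hQ x hx).mpr hQx
      exact hb ((hu b hbP) ▸ hbt)
    rw [if_neg hno, Finset.sum_eq_zero
      (fun b hbt => if_neg (fun hP => hb ((hu b hP) ▸ hbt)))]

end Dim

section Pt
variable {d : ℕ} (prec : ℤ → ℤ → Prop) [IsStrictTotalOrder ℤ prec]

open Classical in
/-- Number of levels in `[∑p, t)` at which the segment steps in direction `j`. -/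
noncomputable def cntD (p q : Fin d → ℤ) (t : ℤ) (j : Fin d) : ℕ :=
  ((Finset.Ico (∑ i, p i) t).filter (fun s => dirAt prec p q s j)).card

/-- The point of the digital segment at coordinate sum `t`. -/
noncomputable def ptD (p q : Fin d → ℤ) (t : ℤ) : Fin d → ℤ :=
  fun j => p j + (cntD prec p q t j : ℤ)

open Classical in
lemma mem_digSegD {p q r : Fin d → ℤ} :
    r ∈ digSegD prec p q ↔ ((∑ i, p i) ≤ (∑ i, r i) ∧ (∑ i, r i) ≤ (∑ i, q i) ∧
      ∀ j, r j = ptD prec p q (∑ i, r i) j) :=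
  Iff.rfl

lemma cntD_mono (p q : Fin d → ℤ) {t t' : ℤ} (h : t ≤ t') (j : Fin d) :
    cntD prec p q t j ≤ cntD prec p q t' j := by
  classical
  unfold cntD
  apply Finset.card_le_card
  intro x hx
  obtain ⟨h1, h2⟩ := Finset.mem_filter.mp hx
  exact Finset.mem_filter.mpr ⟨Finset.Ico_subset_Ico le_rfl h h1, h2⟩

lemma cntD_end (p q : Fin d → ℤ) (hpq : ∀ i, p i ≤ q i) (j : Fin d) :
    (cntD prec p q (∑ i, q i) j : ℤ) = q j - p j :=
  dirAt_card prec p q hpq j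

lemma cntD_start (p q : Fin d → ℤ) (j : Fin d) : cntD prec p q (∑ i, p i) j = 0 := by
  classical
  unfold cntD
  rw [Finset.Ico_self]
  apply Finset.card_eq_zero.mpr
  apply Finset.subset_empty.mp
  intro x hx
  exact (Finset.mem_filter.mp hx).1

lemma sum_cntD (hd : 0 < d) (p q : Fin d → ℤ) (hpq : ∀ i, p i ≤ q i) {t : ℤ}
    (ht1 : (∑ i, p i) ≤ t) (ht2 : t ≤ (∑ i, q i)) :
    (∑ j, (cntD prec p q t j : ℤ)) = t - (∑ i, p i) := by
  classical
  unfold cntD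
  have hmem : ∀ s ∈ Finset.Ico (∑ i, p i) t, s ∈ Finset.Ico (∑ i, p i) (∑ i, q i) :=
    fun s hs => Finset.mem_Ico.mpr ⟨(Finset.mem_Ico.mp hs).1,
      lt_of_lt_of_le (Finset.mem_Ico.mp hs).2 ht2⟩
  have key := sum_card_filter_unique (Finset.Ico (∑ i, p i) t) (dirAt prec p q)
    Finset.univ (fun _ => True)
    (fun s hs => dirAt_existsUnique prec hd p q hpq (hmem s hs))
    (fun s hs => by
      simp only [iff_true]
      obtain ⟨j, hj, _⟩ := dirAt_existsUnique prec hd p q hpq (hmem s hs)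
      exact ⟨j, Finset.mem_univ j, hj⟩)
  rw [Finset.filter_true] at key
  rw [← Nat.cast_sum, key, Int.card_Ico]
  omega

lemma sum_ptD (hd : 0 < d) (p q : Fin d → ℤ) (hpq : ∀ i, p i ≤ q i) {t : ℤ}
    (ht1 : (∑ i, p i) ≤ t) (ht2 : t ≤ (∑ i, q i)) :
    (∑ j, ptD prec p q t j) = t := by
  unfold ptD
  rw [Finset.sum_add_distrib, sum_cntD prec hd p q hpq ht1 ht2]
  ring

lemma ptD_start (p q : Fin d → ℤ) : ptD prec p q (∑ i, p i) = p := by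
  funext j
  unfold ptD
  rw [cntD_start]
  simp

lemma ptD_end (p q : Fin d → ℤ) (hpq : ∀ i, p i ≤ q i) : ptD prec p q (∑ i, q i) = q := by
  funext j
  unfold ptD
  rw [cntD_end prec p q hpq]
  ring

lemma ptD_mem (hd : 0 < d) (p q : Fin d → ℤ) (hpq : ∀ i, p i ≤ q i) {t : ℤ}
    (ht1 : (∑ i, p i) ≤ t) (ht2 : t ≤ (∑ i, q i)) :
    ptD prec p q t ∈ digSegD prec p q := by
  rw [mem_digSegD, sum_ptD prec hd p q hpq ht1 ht2]
  exact ⟨ht1, ht2, fun j => rfl⟩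

open Classical in
lemma cntD_step (p q : Fin d → ℤ) {t : ℤ} (ht1 : (∑ i, p i) ≤ t) (j : Fin d) :
    cntD prec p q (t + 1) j = cntD prec p q t j + (if dirAt prec p q t j then 1 else 0) := by
  unfold cntD
  have hins : Finset.Ico (∑ i, p i) (t + 1) = insert t (Finset.Ico (∑ i, p i) t) := by
    ext x
    simp only [Finset.mem_Ico, Finset.mem_insert]
    omega
  rw [hins, Finset.filter_insert]
  by_cases hdir : dirAt prec p q t j
  · rw [if_pos hdir, if_pos hdir, Finset.card_insert_of_notMem (fun hmem => by
      have := (Finset.mem_Ico.mp (Finset.mem_filter.mp hmem).1).2; omega)]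
  · rw [if_neg hdir, if_neg hdir]
    omega

lemma ptD_step (hd : 0 < d) (p q : Fin d → ℤ) (hpq : ∀ i, p i ≤ q i) {t : ℤ}
    (ht1 : (∑ i, p i) ≤ t) (ht2 : t < (∑ i, q i)) :
    GridAdjD (ptD prec p q t) (ptD prec p q (t + 1)) := by
  obtain ⟨j0, hj0, huniq⟩ := dirAt_existsUnique prec hd p q hpq
    (Finset.mem_Ico.mpr ⟨ht1, ht2⟩)
  refine ⟨j0, ?_, ?_⟩
  · unfold ptD
    rw [cntD_step prec p q ht1, if_pos hj0]
    push_cast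
    simp
  · intro l hl
    unfold ptD
    rw [cntD_step prec p q ht1, if_neg (fun hdir => hl (huniq l hdir))]
    norm_num

end Pt

section Path
variable {d : ℕ} (prec : ℤ → ℤ → Prop) [IsStrictTotalOrder ℤ prec]

lemma sum_le_sum_of_le {p q : Fin d → ℤ} (hpq : ∀ i, p i ≤ q i) :
    (∑ i, p i) ≤ (∑ i, q i) :=
  Finset.sum_le_sum fun i _ => hpq i

lemma digSegD_path (hd : 0 < d) (p q : Fin d → ℤ) (hpq : ∀ i, p i ≤ q i) :
    IsGridPathD p q (digSegD prec p q) := by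
  have hAB : (∑ i, p i) ≤ (∑ i, q i) := sum_le_sum_of_le hpq
  set A := ∑ i, p i with hA
  set B := ∑ i, q i with hB
  have hn : ((B - A).toNat : ℤ) = B - A := Int.toNat_of_nonneg (by omega)
  refine ⟨(B - A).toNat, fun i => ptD prec p q (A + (i : ℕ)), ?_, ?_, ?_, ?_, ?_⟩
  · show ptD prec p q (A + ((0 : Fin ((B - A).toNat + 1)) : ℕ)) = p
    rw [Fin.val_zero]
    push_cast
    rw [add_zero, hA, ptD_start]
  · show ptD prec p q (A + ((Fin.last (B - A).toNat) : ℕ)) = q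
    rw [Fin.val_last]
    rw [show A + ((B - A).toNat : ℤ) = B by omega, hB, ptD_end prec p q hpq]
  · intro i i' hii
    have hb : (i : ℕ) ≤ (B - A).toNat := Fin.is_le i
    have hb' : (i' : ℕ) ≤ (B - A).toNat := Fin.is_le i'
    have h1 := congrArg (fun r => ∑ j, r j) hii
    simp only at h1
    rw [sum_ptD prec hd p q hpq (by omega) (by omega),
      sum_ptD prec hd p q hpq (by omega) (by omega)] at h1
    exact Fin.ext (by omega)
  · intro i
    have hb : (i : ℕ) < (B - A).toNat := i.isLt
    simp only [Fin.coe_castSucc, Fin.val_succ]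
    have h3 : A + (((i : ℕ) + 1 : ℕ) : ℤ) = (A + (i : ℕ)) + 1 := by push_cast; ring
    rw [h3]
    exact ptD_step prec hd p q hpq (by omega) (by omega)
  · ext r
    constructor
    · rintro ⟨i, rfl⟩
      have hb : (i : ℕ) ≤ (B - A).toNat := Fin.is_le i
      exact ptD_mem prec hd p q hpq (by omega) (by omega)
    · intro hr
      obtain ⟨h1, h2, h3⟩ := (mem_digSegD prec).mp hr
      have hT : ((((∑ i, r i) - A).toNat : ℕ) : ℤ) = (∑ i, r i) - A :=
        Int.toNat_of_nonneg (by omega)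
      refine ⟨⟨((∑ i, r i) - A).toNat, by omega⟩, ?_⟩
      show ptD prec p q (A + ((((∑ i, r i) - A).toNat : ℕ) : ℤ)) = r
      rw [hT, show A + ((∑ i, r i) - A) = ∑ i, r i by ring]
      funext j
      exact (h3 j).symm
end Path

section Fixed
variable {d : ℕ} (prec : ℤ → ℤ → Prop) [IsStrictTotalOrder ℤ prec]

lemma digSegD_fixed (p q : Fin d → ℤ) (hpq : ∀ i, p i ≤ q i) (i : Fin d)
    (hpi : p i = q i) (r : Fin d → ℤ) (hr : r ∈ digSegD prec p q) : r i = p i := by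
  classical
  obtain ⟨h1, h2, h3⟩ := (mem_digSegD prec).mp hr
  have hempty : ∀ s, ¬ dirAt prec p q s i := by
    intro s hdir
    rw [dirAt_iff] at hdir
    have := gSum_succ p q i
    omega
  have : cntD prec p q (∑ l, r l) i = 0 := by
    unfold cntD
    apply Finset.card_eq_zero.mpr
    apply Finset.subset_empty.mp
    intro x hx
    exact absurd (Finset.mem_filter.mp hx).2 (hempty x)
  rw [h3 i]
  unfold ptD
  rw [this]
  simp

end Fixed

section Consist
variable {d : ℕ} (prec : ℤ → ℤ → Prop) [IsStrictTotalOrder ℤ prec]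

lemma card_filter_eq' {α : Type*} (s : Finset α) (p q : α → Prop) {h1 : DecidablePred p}
    {h2 : DecidablePred q} (h : ∀ x ∈ s, (p x ↔ q x)) :
    (@Finset.filter α p h1 s).card = (@Finset.filter α q h2 s).card := by
  have e1 : @Finset.filter α p h1 s = @Finset.filter α q h2 s := by
    apply Finset.ext
    intro x
    rw [Finset.mem_filter, Finset.mem_filter]
    exact and_congr_right (fun hx => h x hx)
  rw [e1]

open Classical in
/-- The number of levels in `[A,T)` whose `(A,B)`-rank is at most `x`. -/
noncomputable def hcnt (A B T x : ℤ) : ℤ :=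
  (((Finset.Ico A T).filter (fun u => rankFromTop prec A B u ≤ x)).card : ℤ)

lemma hcnt_mono (A B T : ℤ) {x y : ℤ} (h : x ≤ y) :
    hcnt prec A B T x ≤ hcnt prec A B T y := by
  classical
  unfold hcnt
  have hsub : (Finset.Ico A T).filter (fun u => rankFromTop prec A B u ≤ x) ⊆
      (Finset.Ico A T).filter (fun u => rankFromTop prec A B u ≤ y) := by
    intro u hu
    obtain ⟨h1, h2⟩ := Finset.mem_filter.mp hu
    exact Finset.mem_filter.mpr ⟨h1, le_trans h2 h⟩
  exact_mod_cast Finset.card_le_card hsub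

lemma hcnt_strict {A B T : ℤ} {s x : ℤ} (hs : s ∈ Finset.Ico A T)
    (hx : x < rankFromTop prec A B s) :
    hcnt prec A B T x < hcnt prec A B T (rankFromTop prec A B s) := by
  classical
  unfold hcnt
  have hsub : (Finset.Ico A T).filter (fun u => rankFromTop prec A B u ≤ x) ⊆
      (Finset.Ico A T).filter (fun u => rankFromTop prec A B u ≤ rankFromTop prec A B s) := by
    intro u hu
    obtain ⟨h1, h2⟩ := Finset.mem_filter.mp hu
    exact Finset.mem_filter.mpr ⟨h1, le_trans h2 hx.le⟩
  have hmem : s ∈ (Finset.Ico A T).filter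
      (fun u => rankFromTop prec A B u ≤ rankFromTop prec A B s) :=
    Finset.mem_filter.mpr ⟨hs, le_rfl⟩
  have hnot : s ∉ (Finset.Ico A T).filter (fun u => rankFromTop prec A B u ≤ x) := by
    intro hmem'
    have := (Finset.mem_filter.mp hmem').2
    omega
  exact_mod_cast Finset.card_lt_card ((Finset.ssubset_iff_of_subset hsub).mpr ⟨s, hmem, hnot⟩)

open Classical in
lemma dirAt_restrict (hd : 0 < d) (p q : Fin d → ℤ) (hpq : ∀ i, p i ≤ q i)
    {r : Fin d → ℤ} (hr : r ∈ digSegD prec p q) {s : ℤ}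
    (hs : s ∈ Finset.Ico (∑ i, p i) (∑ i, r i)) (j : Fin d) :
    dirAt prec p q s j ↔ dirAt prec p r s j := by
  obtain ⟨hT1, hT2, hr3⟩ := (mem_digSegD prec).mp hr
  have hpr : ∀ i, p i ≤ r i := by
    intro i
    have hc : (0 : ℤ) ≤ (cntD prec p q (∑ i, r i) i : ℤ) := Nat.cast_nonneg _
    have := hr3 i
    unfold ptD at this
    omega
  have hIcoTB : ∀ u ∈ Finset.Ico (∑ i, p i) (∑ i, r i),
      u ∈ Finset.Ico (∑ i, p i) (∑ i, q i) := fun u hu =>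
    Finset.mem_Ico.mpr ⟨(Finset.mem_Ico.mp hu).1, lt_of_lt_of_le (Finset.mem_Ico.mp hu).2 hT2⟩
  have hsB : s ∈ Finset.Ico (∑ i, p i) (∑ i, q i) := hIcoTB s hs
  have hrank : ∀ s' ∈ Finset.Ico (∑ i, p i) (∑ i, r i),
      rankFromTop prec (∑ i, p i) (∑ i, r i) s' =
        hcnt prec (∑ i, p i) (∑ i, q i) (∑ i, r i)
          (rankFromTop prec (∑ i, p i) (∑ i, q i) s') := by
    intro s' hs'
    have h1 : rankFromTop prec (∑ i, p i) (∑ i, r i) s' =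
        ((((Finset.Ico (∑ i, p i) (∑ i, r i)).filter
          (fun u => u = s' ∨ prec s' u)).card : ℕ) : ℤ) := rfl
    rw [h1]
    unfold hcnt
    exact_mod_cast card_filter_eq' _ _ _
      (fun u hu => (rank_le_rank_iff prec (hIcoTB _ hs') (hIcoTB _ hu)).symm)
  have hg : ∀ m : ℕ, gSum p r m =
      hcnt prec (∑ i, p i) (∑ i, q i) (∑ i, r i) (gSum p q m) := by
    intro m
    have h1 : gSum p r m = ∑ l ∈ Finset.univ.filter (fun l : Fin d => m ≤ (l : ℕ)),
        (((Finset.Ico (∑ i, p i) (∑ i, r i)).filter (fun s => dirAt prec p q s l)).card : ℤ) := by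
      unfold gSum
      apply Finset.sum_congr rfl
      intro l _
      rw [hr3 l]
      unfold ptD cntD
      ring
    have key := sum_card_filter_unique (Finset.Ico (∑ i, p i) (∑ i, r i)) (dirAt prec p q)
      (Finset.univ.filter (fun l : Fin d => m ≤ (l : ℕ)))
      (fun u => rankFromTop prec (∑ i, p i) (∑ i, q i) u ≤ gSum p q m)
      (fun u hu => dirAt_existsUnique prec hd p q hpq (hIcoTB u hu))
      (fun u hu => by
        constructor
        · rintro ⟨l, hlmem, hldir⟩
          have hml : m ≤ (l : ℕ) := (Finset.mem_filter.mp hlmem).2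
          rw [dirAt_iff] at hldir
          have := gSum_anti p q hpq hml
          omega
        · intro hle
          obtain ⟨l, hldir, _⟩ := dirAt_existsUnique prec hd p q hpq (hIcoTB u hu)
          have hiff := (dirAt_iff prec p q u l).mp hldir
          have hml : m ≤ (l : ℕ) := by
            by_contra hc
            have := gSum_anti p q hpq (show (l : ℕ) + 1 ≤ m by omega)
            omega
          exact ⟨l, Finset.mem_filter.mpr ⟨Finset.mem_univ l, hml⟩, hldir⟩)
    rw [h1, ← Nat.cast_sum]
    unfold hcnt
    exact_mod_cast key.trans (card_filter_eq' _ _ _ (fun u hu => Iff.rfl))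
  have hfwd : ∀ l : Fin d, dirAt prec p q s l → dirAt prec p r s l := by
    intro l hl
    rw [dirAt_iff] at hl
    rw [dirAt_iff prec p r s l, hrank s hs, hg, hg]
    exact ⟨hcnt_strict prec hs hl.1, hcnt_mono prec _ _ _ hl.2⟩
  constructor
  · exact hfwd j
  · intro hj
    obtain ⟨j1, hj1, hu1⟩ := dirAt_existsUnique prec hd p q hpq hsB
    obtain ⟨j2, hj2, hu2⟩ := dirAt_existsUnique prec hd p r hpr hs
    have e1 : j1 = j2 := hu2 j1 (hfwd j1 hj1)
    have e2 : j = j2 := hu2 j hj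
    rw [e2, ← e1]
    exact hj1

open Classical in
lemma digSegD_subseg (hd : 0 < d) (p q : Fin d → ℤ) (hpq : ∀ i, p i ≤ q i)
    {r : Fin d → ℤ} (hr : r ∈ digSegD prec p q) :
    digSegD prec p r ⊆ digSegD prec p q := by
  intro r' hr'
  have hrq := (mem_digSegD prec).mp hr
  obtain ⟨h1, h2, h3⟩ := (mem_digSegD prec).mp hr'
  rw [mem_digSegD]
  refine ⟨h1, le_trans h2 hrq.2.1, fun j => ?_⟩
  rw [h3 j]
  have heq : (Finset.Ico (∑ i, p i) (∑ i, r' i)).filter (fun s => dirAt prec p r s j)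
      = (Finset.Ico (∑ i, p i) (∑ i, r' i)).filter (fun s => dirAt prec p q s j) := by
    apply Finset.ext
    intro u
    simp only [Finset.mem_filter, and_congr_right_iff]
    intro hu
    have huT : u ∈ Finset.Ico (∑ i, p i) (∑ i, r i) := Finset.mem_Ico.mpr
      ⟨(Finset.mem_Ico.mp hu).1, lt_of_lt_of_le (Finset.mem_Ico.mp hu).2 h2⟩
    exact (dirAt_restrict prec hd p q hpq hr huT j).symm
  unfold ptD cntD
  rw [heq]

end Consist

section Prolong
variable {d : ℕ} (prec : ℤ → ℤ → Prop) [IsStrictTotalOrder ℤ prec]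

open Classical in
lemma rank_split {A B s : ℤ} (hAB : A ≤ B) (hs : s ∈ Finset.Ico A B) :
    rankFromTop prec A (B + 1) s = rankFromTop prec A B s + (if prec s B then 1 else 0) := by
  have hins : Finset.Ico A (B + 1) = insert B (Finset.Ico A B) := by
    ext x
    simp only [Finset.mem_Ico, Finset.mem_insert]
    omega
  have hsB : s ≠ B := by have := (Finset.mem_Ico.mp hs).2; omega
  unfold rankFromTop
  rw [hins, Finset.filter_insert]
  by_cases hp : prec s B
  · rw [if_pos (Or.inr hp), if_pos hp,
      Finset.card_insert_of_notMem (fun hmem => by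
        have := (Finset.mem_Ico.mp (Finset.mem_filter.mp hmem).1).2
        omega)]
    push_cast
    ring
  · have hnot : ¬ (B = s ∨ prec s B) := by
      rintro (h | h)
      · exact hsB h.symm
      · exact hp h
    rw [if_neg hnot, if_neg hp, add_zero]

open Classical in
lemma rank_top_split {A B : ℤ} (hAB : A ≤ B) :
    rankFromTop prec A (B + 1) B =
      1 + (((Finset.Ico A B).filter (fun u => prec B u)).card : ℤ) := by
  have hins : Finset.Ico A (B + 1) = insert B (Finset.Ico A B) := by
    ext x
    simp only [Finset.mem_Ico, Finset.mem_insert]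
    omega
  unfold rankFromTop
  rw [hins, Finset.filter_insert, if_pos (Or.inl rfl),
    Finset.card_insert_of_notMem (fun hmem => by
      have := (Finset.mem_Ico.mp (Finset.mem_filter.mp hmem).1).2
      omega)]
  have hcc : ((Finset.Ico A B).filter (fun u => u = B ∨ prec B u)).card
      = ((Finset.Ico A B).filter (fun u => prec B u)).card := by
    apply card_filter_eq'
    intro u hu
    have hune : u ≠ B := by have := (Finset.mem_Ico.mp hu).2; omega
    constructor
    · rintro (h | h)
      · exact absurd h hune
      · exact h
    · exact Or.inr
  rw [hcc]
  push_cast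
  ring

open Classical in
lemma prec_top_iff {A B s : ℤ} (hAB : A ≤ B) (hs : s ∈ Finset.Ico A B) :
    prec s B ↔ rankFromTop prec A (B + 1) B ≤ rankFromTop prec A B s := by
  rw [rank_top_split prec hAB]
  constructor
  · intro hp
    have hsub : insert s ((Finset.Ico A B).filter (fun u => prec B u)) ⊆
        (Finset.Ico A B).filter (fun u => u = s ∨ prec s u) := by
      intro u hu
      rcases Finset.mem_insert.mp hu with rfl | hu'
      · exact Finset.mem_filter.mpr ⟨hs, Or.inl rfl⟩
      · obtain ⟨h1, h2⟩ := Finset.mem_filter.mp hu'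
        exact Finset.mem_filter.mpr ⟨h1, Or.inr (prec_trans prec hp h2)⟩
    have hcard := Finset.card_le_card hsub
    rw [Finset.card_insert_of_notMem
      (fun hmem => prec_asymm prec hp (Finset.mem_filter.mp hmem).2)] at hcard
    unfold rankFromTop
    push_cast
    have he : ((Finset.Ico A B).filter (prec B)).card
        = ((Finset.Ico A B).filter (fun u => prec B u)).card := rfl
    omega
  · intro hk
    by_contra hp
    have hsB : s ≠ B := by have := (Finset.mem_Ico.mp hs).2; omega
    rcases prec_tri prec s B with h | h | h
    · exact hp h
    · exact hsB h
    · have hsub : (Finset.Ico A B).filter (fun u => u = s ∨ prec s u) ⊆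
          (Finset.Ico A B).filter (fun u => prec B u) := by
        intro u hu
        obtain ⟨h1, h2⟩ := Finset.mem_filter.mp hu
        rcases h2 with rfl | h2
        · exact Finset.mem_filter.mpr ⟨h1, h⟩
        · exact Finset.mem_filter.mpr ⟨h1, prec_trans prec h h2⟩
      have hcard := Finset.card_le_card hsub
      have he : ((Finset.Ico A B).filter (prec B)).card
          = ((Finset.Ico A B).filter (fun u => prec B u)).card := rfl
      unfold rankFromTop at hk
      push_cast at hk
      omega

open Classical in
lemma rank_extend {A B s : ℤ} (hAB : A ≤ B) (hs : s ∈ Finset.Ico A B) :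
    rankFromTop prec A (B + 1) s = rankFromTop prec A B s +
      (if rankFromTop prec A (B + 1) B ≤ rankFromTop prec A B s then 1 else 0) := by
  rw [rank_split prec hAB hs]
  congr 1
  by_cases h : prec s B
  · rw [if_pos h, if_pos ((prec_top_iff prec hAB hs).mp h)]
  · rw [if_neg h, if_neg (fun hc => h ((prec_top_iff prec hAB hs).mpr hc))]

lemma gSum_update (p q : Fin d → ℤ) (j0 : Fin d) (m : ℕ) :
    gSum p (Function.update q j0 (q j0 + 1)) m =
      gSum p q m + (if m ≤ (j0 : ℕ) then 1 else 0) := by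
  unfold gSum
  have hterm : ∀ l ∈ Finset.univ.filter (fun l : Fin d => m ≤ (l : ℕ)),
      Function.update q j0 (q j0 + 1) l - p l = (q l - p l) + (if l = j0 then (1:ℤ) else 0) := by
    intro l _
    by_cases h : l = j0
    · subst h
      rw [Function.update_self, if_pos rfl]
      ring
    · rw [Function.update_of_ne h, if_neg h]
      ring
  rw [Finset.sum_congr rfl hterm, Finset.sum_add_distrib,
    Finset.sum_ite_eq' _ j0 (fun _ => (1:ℤ))]
  congr 1
  by_cases h : m ≤ (j0 : ℕ)
  · rw [if_pos (by simp [h]), if_pos h]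
  · rw [if_neg (by simp [h]), if_neg h]

lemma sum_update_succ (q : Fin d → ℤ) (j0 : Fin d) :
    (∑ i, Function.update q j0 (q j0 + 1) i) = (∑ i, q i) + 1 := by
  rw [Finset.sum_update_of_mem (Finset.mem_univ j0) q (q j0 + 1),
    Finset.sum_eq_add_sum_sdiff_singleton_of_mem (Finset.mem_univ j0) q]
  ring

open Classical in
lemma digSegD_prolong (hd : 0 < d) (p q : Fin d → ℤ) (hpq : ∀ i, p i ≤ q i) :
    ∃ r : Fin d → ℤ, (∀ i, q i ≤ r i) ∧ r ∉ digSegD prec p q ∧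
      digSegD prec p q ⊆ digSegD prec p r := by
  have hAB : (∑ i, p i) ≤ (∑ i, q i) := sum_le_sum_of_le hpq
  obtain ⟨j0, hq'⟩ : ∃ j0 : Fin d, q ∈ digSegD prec p (Function.update q j0 (q j0 + 1)) := by
    by_cases hcase : (∑ i, p i) = (∑ i, q i)
    · refine ⟨⟨0, hd⟩, ?_⟩
      have hq_eq : ∀ i, q i = p i := by
        have hz : ∑ i, (q i - p i) = 0 := by
          rw [Finset.sum_sub_distrib]
          omega
        intro i
        have := (Finset.sum_eq_zero_iff_of_nonneg
          (fun i _ => by have := hpq i; omega)).mp hz i (Finset.mem_univ i)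
        omega
      rw [mem_digSegD]
      refine ⟨hAB, by rw [sum_update_succ]; omega, fun j => ?_⟩
      have hzero : cntD prec p (Function.update q ⟨0, hd⟩ (q ⟨0, hd⟩ + 1)) (∑ i, q i) j = 0 := by
        unfold cntD
        rw [← hcase, Finset.Ico_self]
        apply Finset.card_eq_zero.mpr
        apply Finset.subset_empty.mp
        intro x hx
        exact (Finset.mem_filter.mp hx).1
      unfold ptD
      rw [hzero]
      have := hq_eq j
      omega
    · have hAB' : (∑ i, p i) < (∑ i, q i) := lt_of_le_of_ne hAB hcase
      have hBmem : (∑ i, q i) ∈ Finset.Ico (∑ i, p i) ((∑ i, q i) + 1) := by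
        simp only [Finset.mem_Ico]
        omega
      have hk1 : 1 ≤ rankFromTop prec (∑ i, p i) ((∑ i, q i) + 1) (∑ i, q i) :=
        rank_one_le prec hBmem
      have hk2 : rankFromTop prec (∑ i, p i) ((∑ i, q i) + 1) (∑ i, q i) ≤
          (∑ i, q i) + 1 - (∑ i, p i) := rank_le prec (by omega) _
      have hvfacts : min (rankFromTop prec (∑ i, p i) ((∑ i, q i) + 1) (∑ i, q i))
            ((∑ i, q i) - (∑ i, p i)) ≤ rankFromTop prec (∑ i, p i) ((∑ i, q i) + 1) (∑ i, q i) ∧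
          min (rankFromTop prec (∑ i, p i) ((∑ i, q i) + 1) (∑ i, q i))
            ((∑ i, q i) - (∑ i, p i)) ≤ (∑ i, q i) - (∑ i, p i) ∧
          (min (rankFromTop prec (∑ i, p i) ((∑ i, q i) + 1) (∑ i, q i))
            ((∑ i, q i) - (∑ i, p i)) = rankFromTop prec (∑ i, p i) ((∑ i, q i) + 1) (∑ i, q i) ∨
           min (rankFromTop prec (∑ i, p i) ((∑ i, q i) + 1) (∑ i, q i))
            ((∑ i, q i) - (∑ i, p i)) = (∑ i, q i) - (∑ i, p i)) :=
        ⟨min_le_left _ _, min_le_right _ _, min_choice _ _⟩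
      obtain ⟨j0, hj0a, hj0b⟩ := band_exists hd p q
        (v := min (rankFromTop prec (∑ i, p i) ((∑ i, q i) + 1) (∑ i, q i))
          ((∑ i, q i) - (∑ i, p i)))
        (by omega) (by rw [gSum_zero]; exact min_le_right _ _)
      refine ⟨j0, ?_⟩
      have hsum' : (∑ i, Function.update q j0 (q j0 + 1) i) = (∑ i, q i) + 1 :=
        sum_update_succ q j0
      have hequiv : ∀ u ∈ Finset.Ico (∑ i, p i) (∑ i, q i), ∀ l : Fin d,
          dirAt prec p q u l ↔ dirAt prec p (Function.update q j0 (q j0 + 1)) u l := by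
        intro u hu l
        have hρ1 : 1 ≤ rankFromTop prec (∑ i, p i) (∑ i, q i) u := rank_one_le prec hu
        have hρ2 : rankFromTop prec (∑ i, p i) (∑ i, q i) u ≤ (∑ i, q i) - (∑ i, p i) :=
          rank_le prec hAB u
        have hrk := rank_extend prec hAB hu
        have hiff' : dirAt prec p (Function.update q j0 (q j0 + 1)) u l ↔
            (gSum p (Function.update q j0 (q j0 + 1)) ((l : ℕ) + 1) <
              rankFromTop prec (∑ i, p i) ((∑ i, q i) + 1) u ∧
             rankFromTop prec (∑ i, p i) ((∑ i, q i) + 1) u ≤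
              gSum p (Function.update q j0 (q j0 + 1)) (l : ℕ)) := by
          have h := dirAt_iff prec p (Function.update q j0 (q j0 + 1)) u l
          rw [hsum'] at h
          exact h
        rw [dirAt_iff prec p q u l, hiff', gSum_update, gSum_update, hrk]
        rcases Nat.lt_trichotomy (l : ℕ) (j0 : ℕ) with hc | hc | hc
        · have ha1 := gSum_anti p q hpq (show (l : ℕ) + 1 ≤ (j0 : ℕ) by omega)
          have ha2 := gSum_anti p q hpq (show (j0 : ℕ) ≤ (j0 : ℕ) by omega)
          have ha3 := gSum_anti p q hpq (show (l : ℕ) ≤ (l : ℕ) + 1 by omega)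
          split_ifs <;> omega
        · rw [hc]
          split_ifs <;> omega
        · have ha1 := gSum_anti p q hpq (show (j0 : ℕ) + 1 ≤ (l : ℕ) by omega)
          have ha2 := gSum_anti p q hpq (show (l : ℕ) ≤ (l : ℕ) + 1 by omega)
          split_ifs <;> omega
      rw [mem_digSegD]
      refine ⟨hAB, by rw [hsum']; omega, fun j => ?_⟩
      have hcnteq : ((Finset.Ico (∑ i, p i) (∑ i, q i)).filter
            (fun s => dirAt prec p (Function.update q j0 (q j0 + 1)) s j)).card
          = ((Finset.Ico (∑ i, p i) (∑ i, q i)).filter (fun s => dirAt prec p q s j)).card :=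
        card_filter_eq' _ _ _ (fun u hu => (hequiv u hu j).symm)
      unfold ptD cntD
      rw [hcnteq]
      have := dirAt_card prec p q hpq j
      omega
  have hqq' : ∀ i, q i ≤ Function.update q j0 (q j0 + 1) i := by
    intro i
    by_cases h : i = j0
    · subst h
      rw [Function.update_self]
      omega
    · rw [Function.update_of_ne h]
  have hpq' : ∀ i, p i ≤ Function.update q j0 (q j0 + 1) i :=
    fun i => le_trans (hpq i) (hqq' i)
  refine ⟨Function.update q j0 (q j0 + 1), hqq', ?_, ?_⟩
  · intro hmem
    have h := ((mem_digSegD prec).mp hmem).2.1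
    rw [sum_update_succ] at h
    omega
  · exact digSegD_subseg prec hd p (Function.update q j0 (q j0 + 1)) hpq' hq'

end Prolong

end DigSegProof


theorem digSegD_axioms (d : ℕ) (hd : 2 ≤ d) (prec : ℤ → ℤ → Prop)
    [IsStrictTotalOrder ℤ prec] (p q : Fin d → ℤ) (hpq : ∀ i, p i ≤ q i) :
    IsGridPathD p q (digSegD prec p q) ∧
    (∀ r ∈ digSegD prec p q, digSegD prec p r ⊆ digSegD prec p q) ∧
    (∃ r : Fin d → ℤ, (∀ i, q i ≤ r i) ∧ r ∉ digSegD prec p q ∧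
      digSegD prec p q ⊆ digSegD prec p r) ∧
    (∀ i : Fin d, p i = q i → ∀ r ∈ digSegD prec p q, r i = p i) := by
  have hd0 : 0 < d := by omega
  exact ⟨DigSegProof.digSegD_path prec hd0 p q hpq,
    fun r hr => DigSegProof.digSegD_subseg prec hd0 p q hpq hr,
    DigSegProof.digSegD_prolong prec hd0 p q hpq,
    fun i hpi r hr => DigSegProof.digSegD_fixed prec p q hpq i hpi r hr⟩
end

section
/- Let ≺ be a strict total order on ℤ and let ℓ ⊆ ℤ² be a digital line with respect to S_≺ with non-negative slope, i.e., ℓ is the vertex set of a path infinite in both directions in the grid graph on ℤ², S_≺(p,q) ⊆ ℓ for all p,q ∈ ℓ, and (q_x−p_x)(q_y−p_y) ≥ 0 for all p,q ∈ ℓ. Define the slope A_ℓ = {x+y : (x,y) ∈ ℓ and (x,y+1) ∈ ℓ}. Then A_ℓ is upward closed with respect to ≺: if a ∈ A_ℓ and a ≺ b, then b ∈ A_ℓ. -/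
theorem digital_line_slope_upward_closed (prec : ℤ → ℤ → Prop) [IsStrictTotalOrder ℤ prec]
    (ℓ : Set (ℤ × ℤ))
    (hpath : ∃ f : ℤ → ℤ × ℤ, Function.Injective f ∧
      (∀ i : ℤ, GridAdj (f i) (f (i + 1))) ∧ Set.range f = ℓ)
    (hseg : ∀ p ∈ ℓ, ∀ q ∈ ℓ, digSeg prec p q ⊆ ℓ)
    (hslope : ∀ p ∈ ℓ, ∀ q ∈ ℓ, 0 ≤ ((q : ℤ × ℤ).1 - p.1) * (q.2 - p.2)) :
    ∀ a b : ℤ,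
      a ∈ {s : ℤ | ∃ x y : ℤ, (x, y) ∈ ℓ ∧ (x, y + 1) ∈ ℓ ∧ x + y = s} →
      prec a b →
      b ∈ {s : ℤ | ∃ x y : ℤ, (x, y) ∈ ℓ ∧ (x, y + 1) ∈ ℓ ∧ x + y = s} := by
  intro a b ha hab
  obtain ⟨f, hfinj, hfadj, hfrange⟩ := hpath
  have memℓ : ∀ i, f i ∈ ℓ := fun i => hfrange ▸ ⟨i, rfl⟩
  -- uniqueness of points of ℓ at a given level
  have uniq : ∀ p ∈ ℓ, ∀ q ∈ ℓ, p.1 + p.2 = q.1 + q.2 → p = q := by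
    intro p hp q hq h
    have hs := hslope p hp q hq
    have h2 : q.2 - p.2 = 0 := by nlinarith
    exact Prod.ext (by omega) (by omega)
  -- levels along the path
  set L : ℤ → ℤ := fun i => (f i).1 + (f i).2 with hLdef
  have hstep : ∀ i, L (i+1) = L i + 1 ∨ L (i+1) = L i - 1 := by
    intro i
    rcases hfadj i with ⟨h1, h2⟩ | ⟨h1, h2⟩
    · rcases (abs_eq (by norm_num : (0:ℤ) ≤ 1)).mp h1 with h | h <;> simp only [hLdef] <;> omega
    · rcases (abs_eq (by norm_num : (0:ℤ) ≤ 1)).mp h2 with h | h <;> simp only [hLdef] <;> omega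
  have hLinj : Function.Injective L := by
    intro i j h
    exact hfinj (uniq (f i) (memℓ i) (f j) (memℓ j) h)
  have key : ∀ i : ℤ, L (i+1+1) - L (i+1) = L (i+1) - L i := by
    intro i
    rcases hstep i with h1|h1 <;> rcases hstep (i+1) with h2|h2 <;>
      [omega; skip; skip; omega] <;>
    · exfalso
      have he : L (i+1+1) = L i := by omega
      have := hLinj he
      omega
  have hd : ∀ i : ℤ, L (i+1) - L i = L 1 - L 0 := by
    intro i
    induction i using Int.induction_on with
    | zero => norm_num
    | succ k ih => rw [← ih]; exact key k
    | pred k ih =>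
        have h := key (-(k:ℤ) - 1)
        have e1 : -(k:ℤ) - 1 + 1 = -(k:ℤ) := by ring
        have e2 : -(k:ℤ) - 1 + 1 + 1 = -(k:ℤ) + 1 := by ring
        rw [e1] at h
        rw [e1]
        omega
  have hLval : ∀ i : ℤ, L i = L 0 + (L 1 - L 0) * i := by
    intro i
    induction i using Int.induction_on with
    | zero => ring
    | succ k ih => have := hd (k:ℤ); ring_nf; ring_nf at ih this ⊢; omega
    | pred k ih =>
        have := hd (-(k:ℤ)-1)
        rw [show -(k:ℤ) - 1 + 1 = -(k:ℤ) from by ring] at this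
        rw [show (-(k:ℤ) - 1) = -((k:ℤ)+1) from by ring]
        ring_nf; ring_nf at ih this; omega
  have hd2 : (L 1 - L 0) * (L 1 - L 0) = 1 := by
    have := hstep 0
    rw [show (0:ℤ) + 1 = 1 from by ring] at this
    rcases this with h|h <;> rw [h] <;> ring
  -- every level is attained
  have hsurj : ∀ s : ℤ, ∃ r ∈ ℓ, r.1 + r.2 = s := by
    intro s
    refine ⟨f ((L 1 - L 0) * (s - L 0)), memℓ _, ?_⟩
    show L ((L 1 - L 0) * (s - L 0)) = s
    rw [hLval]
    linear_combination (s - L 0) * hd2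
  -- choose endpoints
  obtain ⟨p, hp, hpl⟩ := hsurj (min a b)
  obtain ⟨q, hq, hql⟩ := hsurj (max a b + 1)
  have hlev : p.1 + p.2 < q.1 + q.2 := by omega
  have hs := hslope p hp q hq
  have hpq1 : p.1 ≤ q.1 := by nlinarith
  have hpq2 : p.2 ≤ q.2 := by nlinarith
  have hseg' : digSegNE prec p q ⊆ ℓ := by
    have h := hseg p hp q hq
    unfold digSeg digSegAux at h
    rwa [if_pos hpq1, if_pos hpq2] at h
  classical
  set c : ℤ → ℕ := fun s =>
    ((Finset.Ico (p.1 + p.2) s).filter (fun t => upAt prec p q t)).card with hcdef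
  -- the staircase points lie on ℓ
  have hr : ∀ s : ℤ, p.1 + p.2 ≤ s → s ≤ q.1 + q.2 →
      ((s - p.2 - (c s : ℤ), p.2 + (c s : ℤ)) : ℤ × ℤ) ∈ ℓ := by
    intro s h1 h2
    apply hseg'
    simp only [digSegNE, Set.mem_setOf_eq]
    have hsum : s - p.2 - (c s : ℤ) + (p.2 + (c s : ℤ)) = s := by ring
    refine ⟨by omega, by omega, ?_⟩
    rw [hsum, hcdef]
  -- increment of c
  have hc : ∀ s : ℤ, p.1 + p.2 ≤ s →
      (c (s+1) : ℤ) = c s + (if upAt prec p q s then 1 else 0) := by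
    intro s h
    have hIcc : Finset.Ico (p.1 + p.2) (s+1) = insert s (Finset.Ico (p.1 + p.2) s) := by
      rw [Finset.Ico_insert_right h]
      rfl
    simp only [hcdef, hIcc, Finset.filter_insert]
    split_ifs with hup
    · rw [Finset.card_insert_of_notMem (by simp [Finset.mem_filter])]
      push_cast; ring
    · norm_num
  -- extract upAt at a
  simp only [Set.mem_setOf_eq] at ha ⊢
  obtain ⟨x, y, hxy1, hxy2, hxya⟩ := ha
  have hb1 : p.1 + p.2 ≤ a := by omega
  have hb2 : a + 1 ≤ q.1 + q.2 := by omega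
  have e1 : ((x, y) : ℤ × ℤ) = (a - p.2 - (c a : ℤ), p.2 + (c a : ℤ)) :=
    uniq _ hxy1 _ (hr a hb1 (by omega)) (by simp; omega)
  have e2 : ((x, y+1) : ℤ × ℤ) = (a + 1 - p.2 - (c (a+1) : ℤ), p.2 + (c (a+1) : ℤ)) :=
    uniq _ hxy2 _ (hr (a+1) (by omega) hb2) (by simp; omega)
  have hy1 : y = p.2 + (c a : ℤ) := congrArg Prod.snd e1
  have hy2 : y + 1 = p.2 + (c (a+1) : ℤ) := congrArg Prod.snd e2
  have hupa : upAt prec p q a := by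
    by_contra hna
    have := hc a hb1
    rw [if_neg hna] at this
    omega
  -- upward closedness of upAt
  have hupb : upAt prec p q b := by
    unfold upAt at hupa ⊢
    refine le_trans ?_ hupa
    have hsub : (Finset.Ico (p.1 + p.2) (q.1 + q.2)).filter (fun u => u = b ∨ prec b u) ⊆
        (Finset.Ico (p.1 + p.2) (q.1 + q.2)).filter (fun u => u = a ∨ prec a u) := by
      intro u hu
      simp only [Finset.mem_filter] at hu ⊢
      refine ⟨hu.1, ?_⟩
      rcases hu.2 with h|h
      · exact Or.inr (h ▸ hab)
      · exact Or.inr (IsTrans.trans a b u hab h)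
    exact_mod_cast Finset.card_le_card hsub
  -- conclude
  have hbb1 : p.1 + p.2 ≤ b := by omega
  have hcb : (c (b+1) : ℤ) = c b + 1 := by
    rw [hc b hbb1, if_pos hupb]
  refine ⟨b - p.2 - (c b : ℤ), p.2 + (c b : ℤ), hr b hbb1 (by omega), ?_, by ring⟩
  have := hr (b+1) (by omega) (by omega)
  have e3 : ((b + 1 - p.2 - (c (b+1) : ℤ), p.2 + (c (b+1) : ℤ)) : ℤ × ℤ)
      = (b - p.2 - (c b : ℤ), p.2 + (c b : ℤ) + 1) := by
    rw [Prod.mk.injEq]; omega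
  rwa [e3] at this
end
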